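/- arXiv:1310.5420 — 15 statements merged into one kernel-verified Lean document; each statement's English description precedes it below -/
import Mathlib

section
/- Define the jammer strategy ẏ by ẏ_0 = Z_n/Z_0, ẏ_n = 1 − Z_n/Z_0, and ẏ_j = 0 for 0 < j < n. Then ẏ is a mixed strategy, its average power satisfies Σ_{j=0}^n ẏ_j J_j = (1 − Z_n/Z_0)·J_max < J_max, and for every mixed strategy x of the transmitter, xᵀZẏ ≤ Z_n. -/
open Finset

/-- A mixed strategy on `{0, …, n}`: nonnegative entries summing to 1. -/
def IsMixed (n : ℕ) (x : ℕ → ℝ) : Prop :=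
  (∀ i ∈ Finset.range (n + 1), 0 ≤ x i) ∧ ∑ i ∈ Finset.range (n + 1), x i = 1

/-- Expected payoff `xᵀ Z y` for the lower-triangular payoff matrix `Z(i,j) = Zᵢ` if `j ≤ i`,
`0` otherwise. -/
noncomputable def pay (n : ℕ) (Z : ℕ → ℝ) (x y : ℕ → ℝ) : ℝ :=
  ∑ i ∈ Finset.range (n + 1), ∑ j ∈ Finset.range (n + 1),
    x i * (if j ≤ i then Z i else 0) * y j

/-- The average jamming power of the strategy `y`. -/
noncomputable def avgPow (n : ℕ) (J y : ℕ → ℝ) : ℝ :=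
  ∑ j ∈ Finset.range (n + 1), y j * J j

/-- The jammer's feasible set: mixed strategies of average power at most `Jave`. -/
def YLE (n : ℕ) (J : ℕ → ℝ) (Jave : ℝ) (y : ℕ → ℝ) : Prop :=
  IsMixed n y ∧ avgPow n J y ≤ Jave

/-- The critical average jamming power `J_{ave,m} = Z_m ∑_{j=1}^m (Z_j⁻¹ - Z_{j-1}⁻¹) J_j`. -/
noncomputable def JaveM (m : ℕ) (J Z : ℕ → ℝ) : ℝ :=
  Z m * ∑ j ∈ Finset.Icc 1 m, ((Z j)⁻¹ - (Z (j - 1))⁻¹) * J j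

lemma sum_two (n : ℕ) (hn : 1 ≤ n) (f : ℕ → ℝ)
    (hf : ∀ j, j ≠ 0 → j ≠ n → f j = 0) :
    ∑ j ∈ Finset.range (n + 1), f j = f 0 + f n := by
  rw [← Finset.sum_subset (s₁ := ({0, n} : Finset ℕ))
    (by intro x hx; simp only [Finset.mem_insert, Finset.mem_singleton] at hx
        rcases hx with h | h <;> simp [Finset.mem_range] <;> omega)
    (by intro x hx hx2; simp only [Finset.mem_insert, Finset.mem_singleton, not_or] at hx2
        exact hf x hx2.1 hx2.2)]
  rw [Finset.sum_pair (by omega)]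

/-- the strategy `ẏ` putting mass `Z_n/Z_0` at `0` and `1 - Z_n/Z_0` at `n`
is a mixed strategy with average power `(1 - Z_n/Z_0) J_max < J_max`, and it forces the
expected payoff down to at most `Z_n`. -/
theorem stmt_1 (n : ℕ) (hn : 1 ≤ n) (J Z : ℕ → ℝ)
    (hJ0 : J 0 = 0) (hJmono : ∀ j < n, J j < J (j + 1))
    (hZanti : ∀ j < n, Z (j + 1) < Z j) (hZpos : 0 < Z n)
    (ydot : ℕ → ℝ)
    (hy : ∀ j, ydot j = if j = 0 then Z n / Z 0 else if j = n then 1 - Z n / Z 0 else 0) :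
    IsMixed n ydot ∧
    avgPow n J ydot = (1 - Z n / Z 0) * J n ∧
    (1 - Z n / Z 0) * J n < J n ∧
    (∀ x : ℕ → ℝ, IsMixed n x → pay n Z x ydot ≤ Z n) := by
  have hZmono : ∀ a b, a ≤ b → b ≤ n → Z b ≤ Z a := by
    intro a b hab hbn
    induction b with
    | zero =>
      have : a = 0 := Nat.le_zero.mp hab
      subst this; exact le_rfl
    | succ k ih =>
      rcases Nat.eq_or_lt_of_le hab with h | h
      · exact le_of_eq (by rw [h])
      · exact le_trans (le_of_lt (hZanti k (by omega))) (ih (by omega) (by omega))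
  have hZ0pos : 0 < Z 0 := lt_of_lt_of_le hZpos (hZmono 0 n (by omega) le_rfl)
  have hZn0 : Z n ≤ Z 0 := hZmono 0 n (by omega) le_rfl
  have hr1 : Z n / Z 0 ≤ 1 := by
    rw [div_le_one hZ0pos]; exact hZn0
  have hr0 : 0 < Z n / Z 0 := div_pos hZpos hZ0pos
  have hJn : 0 < J n := by
    have : ∀ k, k ≤ n → J 0 ≤ J k := by
      intro k hk
      induction k with
      | zero => exact le_rfl
      | succ m ih =>
        exact le_trans (ih (by omega)) (le_of_lt (hJmono m (by omega)))
    rcases Nat.exists_eq_succ_of_ne_zero (by omega : n ≠ 0) with ⟨m, hm⟩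
    calc (0:ℝ) = J 0 := hJ0.symm
    _ ≤ J m := this m (by omega)
    _ < J n := by rw [hm]; exact hJmono m (by omega)
  have hyz : ∀ j, j ≠ 0 → j ≠ n → ydot j = 0 := by
    intro j h1 h2; rw [hy]; simp [h1, h2]
  have hy0 : ydot 0 = Z n / Z 0 := by rw [hy]; simp
  have hyn : ydot n = 1 - Z n / Z 0 := by rw [hy]; simp; omega
  have hmixed : IsMixed n ydot := by
    constructor
    · intro i _
      rw [hy]
      split
      · positivity
      · split
        · linarith
        · exact le_refl 0
    · rw [sum_two n hn ydot hyz, hy0, hyn]; ring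
  refine ⟨hmixed, ?_, ?_, ?_⟩
  · unfold avgPow
    rw [sum_two n hn _ (fun j h1 h2 => by rw [hyz j h1 h2]; ring), hy0, hyn, hJ0]; ring
  · nlinarith
  · intro x hx
    have key : ∀ i ∈ Finset.range (n + 1),
        (∑ j ∈ Finset.range (n + 1), x i * (if j ≤ i then Z i else 0) * ydot j)
        ≤ x i * Z n := by
      intro i hi
      rw [Finset.mem_range] at hi
      rw [sum_two n hn _ (fun j h1 h2 => by rw [hyz j h1 h2]; ring)]
      rw [hy0, hyn]
      have hxi : 0 ≤ x i := hx.1 i (Finset.mem_range.mpr hi)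
      rcases Nat.eq_or_lt_of_le (Nat.lt_succ_iff.mp hi) with heq | hlt
    
      · subst heq
        simp only [Nat.zero_le, if_pos, le_refl]
        have : x i * Z i * (Z i / Z 0) + x i * Z i * (1 - Z i / Z 0) = x i * Z i := by ring
        rw [this]
      · have h1 : (0:ℕ) ≤ i := Nat.zero_le i
        have h2 : ¬ (n ≤ i) := by omega
        simp only [if_pos h1, if_neg h2]
        have hZiZ0 : Z i ≤ Z 0 := hZmono 0 i (by omega) (by omega)
        have : x i * Z i * (Z n / Z 0) ≤ x i * Z 0 * (Z n / Z 0) := by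
          apply mul_le_mul_of_nonneg_right _ (le_of_lt hr0)
          exact mul_le_mul_of_nonneg_left hZiZ0 hxi
        have heq : x i * Z 0 * (Z n / Z 0) = x i * Z n := by
          field_simp
        linarith
    calc pay n Z x ydot ≤ ∑ i ∈ Finset.range (n + 1), x i * Z n :=
        Finset.sum_le_sum key
    _ = (∑ i ∈ Finset.range (n + 1), x i) * Z n := by rw [Finset.sum_mul]
    _ = Z n := by rw [hx.2, one_mul]
end

section
/- Define the jammer strategy ẏ by ẏ_0 = Z_n/Z_0, ẏ_n = 1 − Z_n/Z_0, and ẏ_j = 0 for 0 < j < n. Then for every mixed strategy x of the transmitter, xᵀZẏ = Z_n·[(x_0 + x_n) + Σ_{i=1}^{n−1} (Z_i/Z_0)·x_i], and consequently xᵀZẏ ≤ Z_n with equality if and only if x_0 + x_n = 1. -/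
open Finset

/-- against the strategy `ẏ` of Theorem 1, the expected payoff of any mixed
strategy `x` equals `Z_n ((x_0 + x_n) + ∑_{i=1}^{n-1} (Z_i/Z_0) x_i)`, hence is at most `Z_n`,
with equality iff `x_0 + x_n = 1`. -/
theorem stmt_2 (n : ℕ) (hn : 1 ≤ n) (J Z : ℕ → ℝ)
    (hJ0 : J 0 = 0) (hJmono : ∀ j < n, J j < J (j + 1))
    (hZanti : ∀ j < n, Z (j + 1) < Z j) (hZpos : 0 < Z n)
    (ydot : ℕ → ℝ)
    (hy : ∀ j, ydot j = if j = 0 then Z n / Z 0 else if j = n then 1 - Z n / Z 0 else 0) :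
    ∀ x : ℕ → ℝ, IsMixed n x →
      pay n Z x ydot
        = Z n * ((x 0 + x n) + ∑ i ∈ Finset.Icc 1 (n - 1), (Z i / Z 0) * x i) ∧
      pay n Z x ydot ≤ Z n ∧
      (pay n Z x ydot = Z n ↔ x 0 + x n = 1) := by
  intro x hx
  obtain ⟨hxnn, hxsum⟩ := hx
  have hZlt : ∀ i j, i < j → j ≤ n → Z j < Z i := by
    intro i j hij hjn
    induction j with
    | zero => omega
    | succ k ih =>
      rcases Nat.lt_succ_iff_lt_or_eq.mp hij with h | h
      · exact (hZanti k (by omega)).trans (ih h (by omega))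
      · subst h; exact hZanti _ (by omega)
  have hZ0 : 0 < Z 0 := by
    rcases Nat.eq_zero_or_pos n with h | h
    · omega
    · exact hZpos.trans (hZlt 0 n h le_rfl)
  have hZ0ne : Z 0 ≠ 0 := ne_of_gt hZ0
  have hn0 : (0:ℕ) ≠ n := by omega
  set c : ℝ := Z n / Z 0 with hc
  have hsplit : ∀ g : ℕ → ℝ, ∑ i ∈ Finset.range (n+1), g i
      = g 0 + (∑ i ∈ Finset.Icc 1 (n-1), g i) + g n := by
    intro g
    obtain ⟨m, rfl⟩ : ∃ m, n = m + 1 := ⟨n - 1, by omega⟩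
    rw [Finset.sum_range_succ, Finset.range_eq_Ico,
        Finset.sum_eq_sum_Ico_succ_bot (by omega)]
    norm_num [Finset.Ico_add_one_right_eq_Icc]
  have hpay : pay n Z x ydot
      = Z n * ((x 0 + x n) + ∑ i ∈ Finset.Icc 1 (n - 1), (Z i / Z 0) * x i) := by
    have hinner : ∀ i ∈ Finset.range (n+1),
        (∑ j ∈ Finset.range (n+1), x i * (if j ≤ i then Z i else 0) * ydot j)
        = x i * Z i * c + (if i = n then x i * Z i * (1 - c) else 0) := by
      intro i hi
      have hi' : i ≤ n := by simpa [Nat.lt_succ_iff] using hi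
      have hsub : ({0, n} : Finset ℕ) ⊆ Finset.range (n+1) := by
        intro a ha
        simp only [Finset.mem_insert, Finset.mem_singleton] at ha
        rcases ha with rfl | rfl <;> simp [Nat.lt_succ_iff]
      have hzero : ∀ j ∈ Finset.range (n+1), j ∉ ({0, n} : Finset ℕ) →
          x i * (if j ≤ i then Z i else 0) * ydot j = 0 := by
        intro j _ hj
        simp only [Finset.mem_insert, Finset.mem_singleton, not_or] at hj
        rw [hy]
        simp [hj.1, hj.2]
      rw [← Finset.sum_subset hsub hzero, Finset.sum_pair hn0, hy 0, hy n]
      by_cases h : i = n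
      · subst h
        simp [hn0.symm]
      · have : ¬ (n ≤ i) := by omega
        simp [h, this, hn0]
    rw [pay, Finset.sum_congr rfl hinner, Finset.sum_add_distrib,
        Finset.sum_ite_eq' (Finset.range (n+1)) n,
        if_pos (Finset.self_mem_range_succ n)]
    rw [hsplit (fun i => x i * Z i * c)]
    have hterm : ∑ i ∈ Finset.Icc 1 (n-1), x i * Z i * c
        = Z n * ∑ i ∈ Finset.Icc 1 (n-1), (Z i / Z 0) * x i := by
      rw [Finset.mul_sum]
      refine Finset.sum_congr rfl fun i _ => ?_
      rw [hc]
      field_simp [hc]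
    rw [hterm]
    rw [hc]
    field_simp [hc]
    ring
  have hmem : ∀ i ∈ Finset.Icc 1 (n-1), 1 ≤ i ∧ i ≤ n - 1 := by
    intro i hi; simpa using hi
  have hfac : ∀ i ∈ Finset.Icc 1 (n-1), 0 < 1 - Z i / Z 0 := by
    intro i hi
    obtain ⟨h1, h2⟩ := hmem i hi
    have : Z i < Z 0 := hZlt 0 i (by omega) (by omega)
    have : Z i / Z 0 < 1 := (div_lt_one hZ0).mpr this
    linarith
  have hxnn' : ∀ i ∈ Finset.Icc 1 (n-1), 0 ≤ x i := by
    intro i hi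
    obtain ⟨h1, h2⟩ := hmem i hi
    exact hxnn i (by simp; omega)
  have hsum1 : x 0 + (∑ i ∈ Finset.Icc 1 (n-1), x i) + x n = 1 := by
    rw [← hsplit x]; exact hxsum
  have hST : ∑ i ∈ Finset.Icc 1 (n-1), (Z i / Z 0) * x i
      ≤ ∑ i ∈ Finset.Icc 1 (n-1), x i := by
    refine Finset.sum_le_sum fun i hi => ?_
    have h1 := hfac i hi
    have h2 := hxnn' i hi
    nlinarith
  refine ⟨hpay, ?_, ?_⟩
  · rw [hpay]
    nlinarith
  · rw [hpay]
    constructor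
    · intro h
      have h1 : (x 0 + x n) + ∑ i ∈ Finset.Icc 1 (n-1), (Z i / Z 0) * x i = 1 := by
        exact mul_left_cancel₀ (ne_of_gt hZpos) (h.trans (mul_one (Z n)).symm)
      have h2 : ∑ i ∈ Finset.Icc 1 (n-1), (x i - (Z i / Z 0) * x i) = 0 := by
        rw [Finset.sum_sub_distrib]; linarith
      have h3 : ∀ i ∈ Finset.Icc 1 (n-1), x i = 0 := by
        intro i hi
        have := (Finset.sum_eq_zero_iff_of_nonneg (fun i hi => by
          have := hfac i hi; have := hxnn' i hi; nlinarith)).mp h2 i hi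
        have hf := hfac i hi
        nlinarith
      have h4 : ∑ i ∈ Finset.Icc 1 (n-1), x i = 0 := Finset.sum_eq_zero h3
      linarith
    · intro h
      have h4 : ∑ i ∈ Finset.Icc 1 (n-1), x i = 0 := by linarith
      have h3 : ∀ i ∈ Finset.Icc 1 (n-1), x i = 0 :=
        (Finset.sum_eq_zero_iff_of_nonneg hxnn').mp h4
      have h5 : ∑ i ∈ Finset.Icc 1 (n-1), (Z i / Z 0) * x i = 0 :=
        Finset.sum_eq_zero fun i hi => by rw [h3 i hi, mul_zero]
      rw [h5, h, add_zero, mul_one]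
end

section
/- For every 0 ≤ m ≤ n, let ŷ be the jammer strategy with ŷ_0 = Z_m/Z_0, ŷ_j = Z_m·(Z_j^{−1} − Z_{j−1}^{−1}) for 1 ≤ j ≤ m, and ŷ_j = 0 for j > m. Then for every mixed strategy x of the transmitter, xᵀZŷ = Z_m·Σ_{i=0}^m x_i + Σ_{i=m+1}^n Z_i·x_i, and consequently xᵀZŷ ≤ Z_m. -/
open Finset

/-- against `ŷ`, the expected payoff of any mixed strategy `x` equals
`Z_m ∑_{i=0}^m x_i + ∑_{i=m+1}^n Z_i x_i`, hence is at most `Z_m`. -/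
theorem stmt_4 (n : ℕ) (hn : 1 ≤ n) (J Z : ℕ → ℝ)
    (hJ0 : J 0 = 0) (hJmono : ∀ j < n, J j < J (j + 1))
    (hZanti : ∀ j < n, Z (j + 1) < Z j) (hZpos : 0 < Z n)
    (m : ℕ) (hm : m ≤ n) (yhat : ℕ → ℝ)
    (hy : ∀ j, yhat j = if j = 0 then Z m / Z 0
      else if j ≤ m then Z m * ((Z j)⁻¹ - (Z (j - 1))⁻¹) else 0) :
    ∀ x : ℕ → ℝ, IsMixed n x →
      pay n Z x yhat
        = Z m * ∑ i ∈ Finset.range (m + 1), x i + ∑ i ∈ Finset.Icc (m + 1) n, Z i * x i ∧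
      pay n Z x yhat ≤ Z m := by

  -- monotonicity of Z
  have hmono : ∀ i j, i ≤ j → j ≤ n → Z j ≤ Z i := by
    intro i j hij
    induction j, hij using Nat.le_induction with
    | base => intro _; exact le_rfl
    | succ k hik ih =>
      intro hkn
      exact le_trans (le_of_lt (hZanti k (Nat.lt_of_succ_le hkn)))
        (ih (le_trans (Nat.le_succ k) hkn))
  have hZpos' : ∀ i, i ≤ n → 0 < Z i := fun i hi =>
    lt_of_lt_of_le hZpos (hmono i n hi le_rfl)
  -- telescoping sum
  have htel : ∀ k, k ≤ m → ∑ j ∈ Finset.range (k + 1), yhat j = Z m * (Z k)⁻¹ := by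
    intro k hk
    induction k with
    | zero =>
      simp [hy 0, div_eq_mul_inv]
    | succ k ih =>
      rw [Finset.sum_range_succ, ih (le_trans (Nat.le_succ k) hk)]
      rw [hy (k + 1)]
      simp only [Nat.succ_ne_zero, if_false, hk, if_pos, Nat.add_sub_cancel]
      ring
  intro x hx
  -- inner sum computation
  have hinner : ∀ i ∈ Finset.range (n + 1),
      (∑ j ∈ Finset.range (n + 1), x i * (if j ≤ i then Z i else 0) * yhat j)
        = x i * (if i ≤ m then Z m else Z i) := by
    intro i hi
    rw [Finset.mem_range, Nat.lt_succ_iff] at hi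
    by_cases him : i ≤ m
    · rw [if_pos him]
      have hsub : ∑ j ∈ Finset.range (n + 1), x i * (if j ≤ i then Z i else 0) * yhat j
          = ∑ j ∈ Finset.range (i + 1), x i * (if j ≤ i then Z i else 0) * yhat j := by
        refine (Finset.sum_subset ?_ ?_).symm
        · exact Finset.range_subset_range.2 (by omega)
        · intro j hj hj2
          rw [Finset.mem_range, Nat.lt_succ_iff] at hj2
          rw [if_neg (by omega)]
          ring
      rw [hsub]
      have : ∑ j ∈ Finset.range (i + 1), x i * (if j ≤ i then Z i else 0) * yhat j
          = x i * Z i * ∑ j ∈ Finset.range (i + 1), yhat j := by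
        rw [Finset.mul_sum]
        refine Finset.sum_congr rfl fun j hj => ?_
        rw [Finset.mem_range, Nat.lt_succ_iff] at hj
        rw [if_pos hj]
      rw [this, htel i him]
      have hZi : Z i ≠ 0 := ne_of_gt (hZpos' i hi)
      field_simp
    · rw [if_neg him]
      push_neg at him
      have hsub : ∑ j ∈ Finset.range (n + 1), x i * (if j ≤ i then Z i else 0) * yhat j
          = ∑ j ∈ Finset.range (m + 1), x i * (if j ≤ i then Z i else 0) * yhat j := by
        refine (Finset.sum_subset ?_ ?_).symm
        · exact Finset.range_subset_range.2 (by omega)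
        · intro j hj hj2
          rw [Finset.mem_range, Nat.lt_succ_iff] at hj2
          have : yhat j = 0 := by
            rw [hy j, if_neg (by omega), if_neg (by omega)]
          rw [this]; ring
      rw [hsub]
      have : ∑ j ∈ Finset.range (m + 1), x i * (if j ≤ i then Z i else 0) * yhat j
          = x i * Z i * ∑ j ∈ Finset.range (m + 1), yhat j := by
        rw [Finset.mul_sum]
        refine Finset.sum_congr rfl fun j hj => ?_
        rw [Finset.mem_range, Nat.lt_succ_iff] at hj
        rw [if_pos (by omega)]
      rw [this, htel m le_rfl]
      have hZm : Z m ≠ 0 := ne_of_gt (hZpos' m hm)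
      field_simp
  have hpay : pay n Z x yhat
      = Z m * ∑ i ∈ Finset.range (m + 1), x i + ∑ i ∈ Finset.Icc (m + 1) n, Z i * x i := by
    rw [pay, Finset.sum_congr rfl hinner]
    have hsplit : Finset.range (n + 1) = Finset.range (m + 1) ∪ Finset.Icc (m + 1) n := by
      ext a
      simp [Finset.mem_range, Finset.mem_Icc, Nat.lt_succ_iff]
      omega
    rw [hsplit, Finset.sum_union (by
      rw [Finset.disjoint_left]
      intro a ha hb
      rw [Finset.mem_range, Nat.lt_succ_iff] at ha
      rw [Finset.mem_Icc] at hb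
      omega)]
    congr 1
    · rw [Finset.mul_sum]
      refine Finset.sum_congr rfl fun i hi => ?_
      rw [Finset.mem_range, Nat.lt_succ_iff] at hi
      rw [if_pos hi]; ring
    · refine Finset.sum_congr rfl fun i hi => ?_
      rw [Finset.mem_Icc] at hi
      rw [if_neg (by omega)]; ring
  refine ⟨hpay, ?_⟩
  rw [hpay]
  obtain ⟨hxpos, hxsum⟩ := hx
  have hb : ∑ i ∈ Finset.Icc (m + 1) n, Z i * x i ≤ ∑ i ∈ Finset.Icc (m + 1) n, Z m * x i := by
    refine Finset.sum_le_sum fun i hi => ?_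
    rw [Finset.mem_Icc] at hi
    exact mul_le_mul_of_nonneg_right (hmono m i (by omega) hi.2)
      (hxpos i (Finset.mem_range.2 (by omega)))
  calc Z m * ∑ i ∈ Finset.range (m + 1), x i + ∑ i ∈ Finset.Icc (m + 1) n, Z i * x i
      ≤ Z m * ∑ i ∈ Finset.range (m + 1), x i + ∑ i ∈ Finset.Icc (m + 1) n, Z m * x i := by
        linarith
    _ = Z m * ∑ i ∈ Finset.range (n + 1), x i := by
        rw [← Finset.mul_sum, ← mul_add]
        congr 1
        have hsplit : Finset.range (n + 1) = Finset.range (m + 1) ∪ Finset.Icc (m + 1) n := by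
          ext a
          simp [Finset.mem_range, Finset.mem_Icc, Nat.lt_succ_iff]
          omega
        rw [hsplit, Finset.sum_union (by
          rw [Finset.disjoint_left]
          intro a ha hb
          rw [Finset.mem_range, Nat.lt_succ_iff] at ha
          rw [Finset.mem_Icc] at hb
          omega)]
    _ = Z m := by rw [hxsum, mul_one]
end

section
/- For every 0 ≤ m < n one has J_{ave,m} < J_{m+1}, and the vector x̂ defined by x̂_i = Z_m·(J_{i+1} − J_i) / ((J_{m+1} − J_{ave,m})·Z_i) for 0 ≤ i ≤ m and x̂_i = 0 for i > m is a mixed strategy; moreover, for every jammer mixed strategy y with average power Σ_{j=0}^n y_j J_j ≤ J_{ave,m}, the expected payoff satisfies x̂ᵀZy ≥ Z_m. -/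
open Finset

lemma abel_sum (J Z : ℕ → ℝ) (hJ0 : J 0 = 0) (m : ℕ) :
    ∑ i ∈ range (m+1), (J (i+1) - J i) * (Z i)⁻¹
      = J (m+1) * (Z m)⁻¹ - ∑ j ∈ Finset.Icc 1 m, ((Z j)⁻¹ - (Z (j-1))⁻¹) * J j := by
  induction m with
  | zero => simp [hJ0]
  | succ k ih =>
      rw [Finset.sum_range_succ, ih, Finset.sum_Icc_succ_top (by omega : 1 ≤ k+1)]
      simp only [Nat.add_sub_cancel]
      ring

lemma swap_sum (J y : ℕ → ℝ) (M : ℕ) :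
    ∑ i ∈ range (M+1), (J (i+1) - J i) * ∑ j ∈ range (i+1), y j
      = ∑ j ∈ range (M+1), y j * (J (M+1) - J j) := by
  induction M with
  | zero => simp; ring
  | succ k ih =>
      rw [Finset.sum_range_succ, ih,
        Finset.sum_range_succ (f := fun j => y j * (J (k+1+1) - J j)),
        Finset.sum_range_succ (f := y), mul_add]
      have h : ∑ j ∈ range (k+1), y j * (J (k+1+1) - J j)
          = ∑ j ∈ range (k+1), (y j * (J (k+1) - J j) + y j * (J (k+1+1) - J (k+1))) :=
        Finset.sum_congr rfl fun j _ => by ring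
      rw [h, Finset.sum_add_distrib, ← Finset.sum_mul]
      ring


/-- for `0 ≤ m < n`, `J_{ave,m} < J_{m+1}`, the equalizing strategy `x̂` with
`x̂_i = Z_m (J_{i+1} - J_i)/((J_{m+1} - J_{ave,m}) Z_i)` for `i ≤ m` (and `0` otherwise)
is a mixed strategy, and it guarantees payoff at least `Z_m` against every jammer
mixed strategy of average power at most `J_{ave,m}`. -/
theorem stmt_5 (n : ℕ) (hn : 1 ≤ n) (J Z : ℕ → ℝ)
    (hJ0 : J 0 = 0) (hJmono : ∀ j < n, J j < J (j + 1))
    (hZanti : ∀ j < n, Z (j + 1) < Z j) (hZpos : 0 < Z n)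
    (m : ℕ) (hm : m < n) (xhat : ℕ → ℝ)
    (hx : ∀ i, xhat i = if i ≤ m then
      Z m * (J (i + 1) - J i) / ((J (m + 1) - JaveM m J Z) * Z i) else 0) :
    JaveM m J Z < J (m + 1) ∧
    IsMixed n xhat ∧
    (∀ y : ℕ → ℝ, IsMixed n y → avgPow n J y ≤ JaveM m J Z →
      Z m ≤ pay n Z xhat y) := by
  -- monotonicity facts
  have hZle : ∀ a b : ℕ, a ≤ b → b ≤ n → Z b ≤ Z a := by
    intro a b hab
    induction hab with
    | refl => intro _; exact le_refl _
    | @step k h ih =>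
        intro hkn
        exact (le_of_lt (hZanti k (by omega))).trans (ih (by omega))
  have hJle : ∀ a b : ℕ, a ≤ b → b ≤ n → J a ≤ J b := by
    intro a b hab
    induction hab with
    | refl => intro _; exact le_refl _
    | @step k h ih =>
        intro hkn
        exact (ih (by omega)).trans (le_of_lt (hJmono k (by omega)))
  have hZpos' : ∀ i, i ≤ n → 0 < Z i := fun i hi => lt_of_lt_of_le hZpos (hZle i n hi le_rfl)
  set S : ℝ := ∑ i ∈ range (m+1), (J (i+1) - J i) * (Z i)⁻¹ with hS
  have hSpos : 0 < S := by
    apply Finset.sum_pos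
    · intro i hi
      rw [Finset.mem_range] at hi
      have h1 : J i < J (i+1) := hJmono i (by omega)
      have h2 : 0 < Z i := hZpos' i (by omega)
      exact mul_pos (by linarith) (inv_pos.mpr h2)
    · exact ⟨0, Finset.mem_range.mpr (by omega)⟩
  have hZm : 0 < Z m := hZpos' m (le_of_lt hm)
  have hkey : Z m * S = J (m + 1) - JaveM m J Z := by
    rw [hS, abel_sum J Z hJ0 m, JaveM]
    have hZm' : Z m ≠ 0 := ne_of_gt hZm
    field_simp
  have hJJ : JaveM m J Z < J (m + 1) := by
    have : 0 < Z m * S := mul_pos hZm hSpos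
    linarith [hkey]
  have hdpos : 0 < J (m + 1) - JaveM m J Z := by linarith
  -- pointwise formulas for xhat
  have hxf : ∀ i, i ≤ m → xhat i = (J (i+1) - J i) * (Z i)⁻¹ * S⁻¹ := by
    intro i hi
    rw [hx i, if_pos hi, ← hkey]
    have hZi : Z i ≠ 0 := ne_of_gt (hZpos' i (by omega))
    field_simp
  have hxZ : ∀ i, i ≤ m → xhat i * Z i = (J (i+1) - J i) * S⁻¹ := by
    intro i hi
    rw [hxf i hi]
    have hZi : Z i ≠ 0 := ne_of_gt (hZpos' i (by omega))
    field_simp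
  have hx0 : ∀ i, m < i → xhat i = 0 := by
    intro i hi; rw [hx i, if_neg (by omega)]
  -- mixedness
  have hsub : range (m+1) ⊆ range (n+1) := Finset.range_subset_range.mpr (by omega)
  have hoff : ∀ i ∈ range (n+1), i ∉ range (m+1) → xhat i = 0 := by
    intro i _ hi
    apply hx0
    simp only [Finset.mem_range] at hi
    omega
  have hxsum : ∑ i ∈ range (n+1), xhat i = 1 := by
    rw [← Finset.sum_subset hsub hoff]
    have h1 : ∑ i ∈ range (m+1), xhat i
        = ∑ i ∈ range (m+1), (J (i+1) - J i) * (Z i)⁻¹ * S⁻¹ := by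
      apply Finset.sum_congr rfl
      intro i hi
      rw [Finset.mem_range] at hi
      exact hxf i (by omega)
    rw [h1, ← Finset.sum_mul, ← hS, mul_inv_cancel₀ (ne_of_gt hSpos)]
  have hmixed : IsMixed n xhat := by
    constructor
    · intro i _
      rw [hx i]
      split
      · apply div_nonneg
        · have : J i < J (i+1) := hJmono i (by omega)
          have := hZm.le
          nlinarith
        · have := hZpos' i (by omega)
          nlinarith
      · exact le_refl 0
    · exact hxsum
  refine ⟨hJJ, hmixed, ?_⟩
  intro y hy hyp
  obtain ⟨hynn, hysum⟩ := hy
  -- compute the payoff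
  have hpay : pay n Z xhat y
      = S⁻¹ * ∑ i ∈ range (m+1), (J (i+1) - J i) * ∑ j ∈ range (i+1), y j := by
    rw [pay, ← Finset.sum_subset hsub]
    · rw [Finset.mul_sum]
      apply Finset.sum_congr rfl
      intro i hi
      have him : i ≤ m := by simpa [Nat.lt_succ_iff] using Finset.mem_range.mp hi
      have hsub2 : range (i+1) ⊆ range (n+1) := Finset.range_subset_range.mpr (by omega)
      rw [← Finset.sum_subset hsub2]
      · rw [Finset.mul_sum, Finset.mul_sum]
        apply Finset.sum_congr rfl
        intro j hj
        have hji : j ≤ i := by simpa [Nat.lt_succ_iff] using Finset.mem_range.mp hj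
        rw [if_pos hji]
        rw [show xhat i * Z i * y j = (xhat i * Z i) * y j by ring, hxZ i him]
        ring
      · intro j _ hj
        have : ¬ (j ≤ i) := by
          intro h
          exact hj (Finset.mem_range.mpr (by omega))
        rw [if_neg this]
        ring
    · intro i _ hi
      have : m < i := by
        by_contra h
        exact hi (Finset.mem_range.mpr (by omega))
      apply Finset.sum_eq_zero
      intro j _
      rw [hx0 i this]
      ring
  rw [hpay, swap_sum]
  -- lower bound on the double sum
  have hsplit : ∑ j ∈ range (n+1), y j * (J (m+1) - J j)
      = ∑ j ∈ range (m+1), y j * (J (m+1) - J j)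
        + ∑ j ∈ Finset.Ico (m+1) (n+1), y j * (J (m+1) - J j) := by
    rw [Finset.range_eq_Ico, Finset.range_eq_Ico]
    exact (Finset.sum_Ico_consecutive _ (by omega : 0 ≤ m+1) (by omega : m+1 ≤ n+1)).symm
  have htail : ∑ j ∈ Finset.Ico (m+1) (n+1), y j * (J (m+1) - J j) ≤ 0 := by
    apply Finset.sum_nonpos
    intro j hj
    rw [Finset.mem_Ico] at hj
    have h1 : 0 ≤ y j := hynn j (Finset.mem_range.mpr (by omega))
    have h2 : J (m+1) ≤ J j := hJle (m+1) j hj.1 (by omega)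
    nlinarith
  have hfull : ∑ j ∈ range (n+1), y j * (J (m+1) - J j) = J (m+1) - avgPow n J y := by
    rw [avgPow]
    have : ∑ j ∈ range (n+1), y j * (J (m+1) - J j)
        = (∑ j ∈ range (n+1), y j) * J (m+1) - ∑ j ∈ range (n+1), y j * J j := by
      rw [Finset.sum_mul, ← Finset.sum_sub_distrib]
      apply Finset.sum_congr rfl
      intro j _; ring
    rw [this, hysum]; ring
  have hD : Z m * S ≤ ∑ j ∈ range (m+1), y j * (J (m+1) - J j) := by
    have : J (m+1) - avgPow n J y ≤ ∑ j ∈ range (m+1), y j * (J (m+1) - J j) := by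
      rw [← hfull, hsplit]; linarith
    have h2 : J (m+1) - JaveM m J Z ≤ J (m+1) - avgPow n J y := by linarith
    linarith [hkey]
  have hSne : S ≠ 0 := ne_of_gt hSpos
  calc Z m = S⁻¹ * (Z m * S) := by
        field_simp
    _ ≤ S⁻¹ * ∑ j ∈ range (m+1), y j * (J (m+1) - J j) := by
        apply mul_le_mul_of_nonneg_left hD (inv_pos.mpr hSpos).le
end

section
/- For 0 ≤ m < n, let x̂ be the transmitter strategy with x̂_i = Z_m·(J_{i+1} − J_i) / ((J_{m+1} − J_{ave,m})·Z_i) for 0 ≤ i ≤ m and x̂_i = 0 for i > m. Then for every jammer mixed strategy y whose support is contained in {0, …, m} (i.e., y_j = 0 for j > m), the expected payoff is exactly x̂ᵀZy = ((J_{m+1} − Σ_{j=0}^m y_j J_j) / (J_{m+1} − J_{ave,m}))·Z_m; in particular x̂ equalizes: the payoff depends on y only through its average power. -/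
open Finset

/-- for `0 ≤ m < n`, against the equalizing strategy `x̂`, any jammer mixed
strategy `y` supported on `{0, …, m}` yields expected payoff exactly
`((J_{m+1} - ∑_{j=0}^m y_j J_j)/(J_{m+1} - J_{ave,m})) Z_m`: the payoff depends on `y`
only through its average power. -/
theorem stmt_6 (n : ℕ) (hn : 1 ≤ n) (J Z : ℕ → ℝ)
    (hJ0 : J 0 = 0) (hJmono : ∀ j < n, J j < J (j + 1))
    (hZanti : ∀ j < n, Z (j + 1) < Z j) (hZpos : 0 < Z n)
    (m : ℕ) (hm : m < n) (xhat : ℕ → ℝ)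
    (hx : ∀ i, xhat i = if i ≤ m then
      Z m * (J (i + 1) - J i) / ((J (m + 1) - JaveM m J Z) * Z i) else 0) :
    ∀ y : ℕ → ℝ, IsMixed n y → (∀ j, m < j → y j = 0) →
      pay n Z xhat y
        = ((J (m + 1) - ∑ j ∈ Finset.range (m + 1), y j * J j)
            / (J (m + 1) - JaveM m J Z)) * Z m := by

  intro y hy hysupp
  -- Positivity of all Z i for i ≤ n
  have hZpos' : ∀ i, i ≤ n → 0 < Z i := by
    have key : ∀ d, d ≤ n → 0 < Z (n - d) := by
      intro d
      induction d with
      | zero => intro _; simpa using hZpos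
      | succ k ih =>
        intro hk
        have h1 : n - (k + 1) < n := by omega
        have h2 : n - (k + 1) + 1 = n - k := by omega
        have hlt := hZanti (n - (k + 1)) h1
        rw [h2] at hlt
        exact lt_trans (ih (by omega)) hlt
    intro i hi
    have := key (n - i) (by omega)
    rwa [Nat.sub_sub_self hi] at this
  set D : ℝ := J (m + 1) - JaveM m J Z with hD
  -- the effective coefficient
  have hxz : ∀ i, i ≤ m → xhat i * Z i = Z m * (J (i + 1) - J i) / D := by
    intro i hi
    have hZi : Z i ≠ 0 := ne_of_gt (hZpos' i (by omega))
    rw [hx i, if_pos hi, div_mul_eq_mul_div, mul_comm D (Z i), ← div_div,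
      mul_div_assoc, div_self hZi, mul_one]
  -- restrict sums to range (m+1)
  have hsub : Finset.range (m + 1) ⊆ Finset.range (n + 1) := by
    intro k hk; simp only [Finset.mem_range] at hk ⊢; omega
  have hy1 : ∑ j ∈ Finset.range (m + 1), y j = 1 := by
    rw [← hy.2]
    apply Finset.sum_subset hsub
    intro j _ hj
    exact hysupp j (by simp only [Finset.mem_range] at hj; omega)
  -- telescoping sum
  have htel : ∀ j, j ≤ m → ∑ i ∈ Finset.Icc j m, (J (i + 1) - J i) = J (m + 1) - J j := by
    intro j hj
    rw [← Finset.Ico_add_one_right_eq_Icc, Finset.sum_Ico_eq_sum_range]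
    have h := Finset.sum_range_sub (fun k => J (j + k)) (m + 1 - j)
    rw [show j + (m + 1 - j) = m + 1 by omega] at h
    rw [show (j + 0 : ℕ) = j from rfl] at h
    exact h
  have hfilter : ∀ j, j ≤ m → Finset.filter (fun i => j ≤ i) (Finset.range (m + 1))
      = Finset.Icc j m := by
    intro j hj
    ext k
    simp only [Finset.mem_filter, Finset.mem_range, Finset.mem_Icc]
    omega
  have step1 : pay n Z xhat y = ∑ i ∈ Finset.range (m + 1), ∑ j ∈ Finset.range (m + 1),
      xhat i * (if j ≤ i then Z i else 0) * y j := by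
    unfold pay
    rw [← Finset.sum_subset hsub (fun i _ hi => ?_)]
    · apply Finset.sum_congr rfl
      intro i _
      rw [← Finset.sum_subset hsub (fun j _ hj => ?_)]
      rw [hysupp j (by simp only [Finset.mem_range] at hj; omega)]
      ring
    · have hxi : xhat i = 0 := by
        rw [hx i, if_neg (by simp only [Finset.mem_range] at hi; omega)]
      simp [hxi]
  rw [step1]
  have step2 : (∑ i ∈ Finset.range (m + 1), ∑ j ∈ Finset.range (m + 1),
      xhat i * (if j ≤ i then Z i else 0) * y j)
      = ∑ j ∈ Finset.range (m + 1), ∑ i ∈ Finset.range (m + 1),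
        (if j ≤ i then (Z m * (J (i + 1) - J i) / D) * y j else 0) := by
    rw [Finset.sum_comm]
    apply Finset.sum_congr rfl
    intro j _
    apply Finset.sum_congr rfl
    intro i hi
    have hi' : i ≤ m := by simp only [Finset.mem_range] at hi; omega
    by_cases h : j ≤ i
    · rw [if_pos h, if_pos h, ← hxz i hi']
    · rw [if_neg h, if_neg h]; ring
  rw [step2]
  have step3 : ∀ j ∈ Finset.range (m + 1),
      (∑ i ∈ Finset.range (m + 1), (if j ≤ i then (Z m * (J (i + 1) - J i) / D) * y j else 0))
      = Z m / D * (J (m + 1) - J j) * y j := by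
    intro j hj
    have hj' : j ≤ m := by simp only [Finset.mem_range] at hj; omega
    rw [← Finset.sum_filter, hfilter j hj', ← Finset.sum_mul, ← htel j hj',
      Finset.mul_sum]
    congr 1
    apply Finset.sum_congr rfl
    intro i _
    ring
  rw [Finset.sum_congr rfl step3]
  have expand : ∀ j ∈ Finset.range (m + 1),
      Z m / D * (J (m + 1) - J j) * y j
        = Z m / D * J (m + 1) * y j - Z m / D * (y j * J j) := by
    intro j _; ring
  rw [Finset.sum_congr rfl expand, Finset.sum_sub_distrib, ← Finset.mul_sum, hy1,
    ← Finset.mul_sum]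
  ring
end

section
/- Fix 0 ≤ m < n and set J_ave = J_{ave,m}. Let x̂ be the transmitter strategy with x̂_i = Z_m·(J_{i+1} − J_i)/((J_{m+1} − J_{ave,m})·Z_i) for 0 ≤ i ≤ m and x̂_i = 0 for i > m, and let ŷ be the jammer strategy with ŷ_0 = Z_m/Z_0, ŷ_j = Z_m·(Z_j^{−1} − Z_{j−1}^{−1}) for 1 ≤ j ≤ m, and ŷ_j = 0 for j > m. Then ŷ ∈ Y_LE(J_{ave,m}), the pair (x̂, ŷ) is a Nash equilibrium of the constrained game, and the value of the game at this equilibrium is x̂ᵀZŷ = Z_m; that is, xᵀZŷ ≤ Z_m for every mixed strategy x, and x̂ᵀZy ≥ Z_m for every y ∈ Y_LE(J_{ave,m}). -/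
open Finset

lemma mono_of_step {f : ℕ → ℝ} {n : ℕ} (h : ∀ j < n, f j < f (j+1)) :
    ∀ i j, i ≤ j → j ≤ n → f i ≤ f j := by
  intro i j hij hjn
  induction j, hij using Nat.le_induction with
  | base => exact le_rfl
  | succ k hk ih =>
    exact le_trans (ih (Nat.le_of_succ_le hjn)) (le_of_lt (h k hjn))

lemma anti_of_step {f : ℕ → ℝ} {n : ℕ} (h : ∀ j < n, f (j+1) < f j) :
    ∀ i j, i ≤ j → j ≤ n → f j ≤ f i := by
  intro i j hij hjn
  induction j, hij using Nat.le_induction with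
  | base => exact le_rfl
  | succ k hk ih =>
    exact le_trans (le_of_lt (h k hjn)) (ih (Nat.le_of_succ_le hjn))


/-- for `0 ≤ m < n` and budget `J_ave = J_{ave,m}`, the pair `(x̂, ŷ)` is a
Nash equilibrium of the constrained game with value `Z_m`. -/
theorem stmt_7 (n : ℕ) (hn : 1 ≤ n) (J Z : ℕ → ℝ)
    (hJ0 : J 0 = 0) (hJmono : ∀ j < n, J j < J (j + 1))
    (hZanti : ∀ j < n, Z (j + 1) < Z j) (hZpos : 0 < Z n)
    (m : ℕ) (hm : m < n) (xhat yhat : ℕ → ℝ)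
    (hx : ∀ i, xhat i = if i ≤ m then
      Z m * (J (i + 1) - J i) / ((J (m + 1) - JaveM m J Z) * Z i) else 0)
    (hy : ∀ j, yhat j = if j = 0 then Z m / Z 0
      else if j ≤ m then Z m * ((Z j)⁻¹ - (Z (j - 1))⁻¹) else 0) :
    IsMixed n xhat ∧
    YLE n J (JaveM m J Z) yhat ∧
    pay n Z xhat yhat = Z m ∧
    (∀ x : ℕ → ℝ, IsMixed n x → pay n Z x yhat ≤ Z m) ∧
    (∀ y : ℕ → ℝ, YLE n J (JaveM m J Z) y → Z m ≤ pay n Z xhat y) := by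
  have hZle : ∀ i j, i ≤ j → j ≤ n → Z j ≤ Z i := anti_of_step hZanti
  have hZpos' : ∀ i, i ≤ n → 0 < Z i := fun i hi => lt_of_lt_of_le hZpos (hZle i n hi le_rfl)
  have hZne : ∀ i, i ≤ n → Z i ≠ 0 := fun i hi => ne_of_gt (hZpos' i hi)
  have hJle : ∀ i j, i ≤ j → j ≤ n → J i ≤ J j := mono_of_step hJmono
  have hmn : m ≤ n := le_of_lt hm
  have hm1n : m + 1 ≤ n := hm
  have hZm : 0 < Z m := hZpos' m hmn
  -- partial sums of yhat telescope
  have hysum : ∀ k, k ≤ m → ∑ j ∈ Finset.range (k+1), yhat j = Z m / Z k := by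
    intro k hk
    induction k with
    | zero => simp [hy 0]
    | succ k ih =>
      rw [Finset.sum_range_succ, ih (le_of_lt (Nat.lt_of_succ_le hk)), hy (k+1)]
      have hk1 : k + 1 ≤ m := hk
      simp only [Nat.succ_ne_zero, if_false, if_pos hk1, Nat.add_sub_cancel]
      have h1 : Z k ≠ 0 := hZne k (by omega)
      have h2 : Z (k+1) ≠ 0 := hZne (k+1) (by omega)
      field_simp
      ring
  -- yhat vanishes beyond m
  have hy0 : ∀ j, m < j → yhat j = 0 := by
    intro j hj
    rw [hy j, if_neg (by omega), if_neg (by omega)]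
  -- nonnegativity of yhat
  have hynn : ∀ j, 0 ≤ yhat j := by
    intro j
    rw [hy j]
    rcases Nat.eq_zero_or_pos j with h0 | h0
    · subst h0; simp only [if_pos rfl]
      exact div_nonneg hZm.le (hZpos' 0 (by omega)).le
    · have hj0 : j ≠ 0 := Nat.pos_iff_ne_zero.mp h0
      simp only [if_neg hj0]
      by_cases hjm : j ≤ m
      · simp only [if_pos hjm]
        have h1 : (Z (j-1))⁻¹ ≤ (Z j)⁻¹ := by
          apply inv_anti₀ (hZpos' j (by omega))
          exact hZle (j-1) j (by omega) (by omega)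
        nlinarith
      · simp only [if_neg hjm]; exact le_rfl
  -- yhat is mixed
  have hysum1 : ∑ j ∈ Finset.range (n+1), yhat j = 1 := by
    have h1 : ∑ j ∈ Finset.range (n+1), yhat j = ∑ j ∈ Finset.range (m+1), yhat j := by
      symm
      apply Finset.sum_subset
      · exact Finset.range_subset_range.mpr (by omega)
      · intro j _ hj
        exact hy0 j (by simpa using hj)
    rw [h1, hysum m le_rfl, div_self (hZne m hmn)]
  have hymixed : IsMixed n yhat := ⟨fun j _ => hynn j, hysum1⟩
  -- average power of yhat equals JaveM
  have havg : avgPow n J yhat = JaveM m J Z := by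
    unfold avgPow JaveM
    rw [Finset.mul_sum]
    have h1 : ∑ j ∈ Finset.range (n+1), yhat j * J j
        = ∑ j ∈ Finset.Icc 1 m, yhat j * J j := by
      symm
      apply Finset.sum_subset
      · intro j hj
        simp only [Finset.mem_Icc] at hj
        exact Finset.mem_range.mpr (by omega)
      · intro j _ hj
        simp only [Finset.mem_Icc, not_and_or, not_le] at hj
        rcases hj with h | h
        · interval_cases j
          rw [hJ0]; ring
        · rw [hy0 j h]; ring
    rw [h1]
    apply Finset.sum_congr rfl
    intro j hj
    simp only [Finset.mem_Icc] at hj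
    rw [hy j, if_neg (by omega), if_pos hj.2]
    ring
  -- partial sums of column payoffs against yhat
  have hcolY : ∀ i, i ≤ n →
      ∑ j ∈ Finset.range (n+1), (if j ≤ i then Z i else 0) * yhat j
        = if i ≤ m then Z m else Z i := by
    intro i hi
    have h1 : ∑ j ∈ Finset.range (n+1), (if j ≤ i then Z i else 0) * yhat j
        = ∑ j ∈ Finset.range (i+1), Z i * yhat j := by
      rw [← Finset.sum_subset (Finset.range_subset_range.mpr (by omega : i+1 ≤ n+1))]
      · apply Finset.sum_congr rfl
        intro j hj
        rw [if_pos (by simpa [Nat.lt_succ_iff] using hj)]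
      · intro j _ hj
        rw [if_neg (by simpa [Nat.lt_succ_iff] using hj), zero_mul]
    rw [h1, ← Finset.mul_sum]
    by_cases him : i ≤ m
    · rw [if_pos him, hysum i him, mul_div_cancel₀ _ (hZne i hi)]
    · rw [if_neg him]
      have h2 : ∑ j ∈ Finset.range (i+1), yhat j = 1 := by
        rw [← hysum1]
        apply Finset.sum_subset (Finset.range_subset_range.mpr (by omega))
        intro j _ hj
        exact hy0 j (by simp at hj; omega)
      rw [h2, mul_one]
  -- pay as sum of rows against yhat
  have hpayrow : ∀ x, pay n Z x yhat
      = ∑ i ∈ Finset.range (n+1), x i * (if i ≤ m then Z m else Z i) := by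
    intro x
    unfold pay
    apply Finset.sum_congr rfl
    intro i hi
    rw [← hcolY i (by simp at hi; omega), Finset.mul_sum]
    apply Finset.sum_congr rfl
    intro j _
    ring
  -- D := J (m+1) - JaveM is positive
  have hJavelt : JaveM m J Z < J (m+1) := by
    have h1 : JaveM m J Z = avgPow n J yhat := havg.symm
    have h2 : avgPow n J yhat ≤ J m := by
      unfold avgPow
      calc ∑ j ∈ Finset.range (n+1), yhat j * J j
          ≤ ∑ j ∈ Finset.range (n+1), yhat j * J m := by
            apply Finset.sum_le_sum
            intro j hj
            by_cases hjm : j ≤ m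
            · exact mul_le_mul_of_nonneg_left (hJle j m hjm hmn) (hynn j)
            · rw [hy0 j (by omega)]; simp
        _ = J m := by rw [← Finset.sum_mul, hysum1, one_mul]
    have h3 : J m < J (m+1) := hJmono m hm
    linarith
  set D := J (m+1) - JaveM m J Z with hD
  have hDpos : 0 < D := by simp [hD]; linarith
  have hDne : D ≠ 0 := ne_of_gt hDpos
  -- telescoping sum for xhat
  have key : ∀ k, k ≤ m → ∑ i ∈ Finset.range (k+1), Z m * (J (i+1) - J i) / Z i
      = Z m * J (k+1) / Z k - Z m * ∑ j ∈ Finset.Icc 1 k, ((Z j)⁻¹ - (Z (j-1))⁻¹) * J j := by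
    intro k hk
    induction k with
    | zero => simp [hJ0]
    | succ k ih =>
      rw [Finset.sum_range_succ, ih (by omega), Finset.sum_Icc_succ_top (by omega : 1 ≤ k+1)]
      have h1 : Z k ≠ 0 := hZne k (by omega)
      have h2 : Z (k+1) ≠ 0 := hZne (k+1) (by omega)
      simp only [Nat.add_sub_cancel]
      field_simp
      ring
  have keym : ∑ i ∈ Finset.range (m+1), Z m * (J (i+1) - J i) / Z i = D := by
    rw [key m le_rfl, mul_comm (Z m) (J (m+1)), mul_div_assoc,
      div_self (hZne m hmn), mul_one, hD]
    rfl
  -- xhat is mixed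
  have hx0 : ∀ i, m < i → xhat i = 0 := fun i hi => by rw [hx i, if_neg (by omega)]
  have hxnn : ∀ i, 0 ≤ xhat i := by
    intro i
    rw [hx i]
    by_cases him : i ≤ m
    · rw [if_pos him]
      apply div_nonneg
      · have := hJmono i (by omega)
        nlinarith
      · exact mul_nonneg hDpos.le (hZpos' i (by omega)).le
    · rw [if_neg him]
  have hxsum1 : ∑ i ∈ Finset.range (n+1), xhat i = 1 := by
    have h1 : ∑ i ∈ Finset.range (n+1), xhat i = ∑ i ∈ Finset.range (m+1), xhat i := by
      symm
      apply Finset.sum_subset (Finset.range_subset_range.mpr (by omega))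
      intro i _ hi
      exact hx0 i (by simp at hi; omega)
    have h2 : ∀ i ∈ Finset.range (m+1), xhat i = Z m * (J (i+1) - J i) / Z i * D⁻¹ := by
      intro i hi
      rw [hx i, if_pos (by simp at hi; omega), mul_comm D (Z i), ← div_div,
        div_eq_mul_inv]
    rw [h1, Finset.sum_congr rfl h2, ← Finset.sum_mul, keym, mul_inv_cancel₀ hDne]
  have hxmixed : IsMixed n xhat := ⟨fun i _ => hxnn i, hxsum1⟩
  -- payoff upper bound against yhat
  have hpayle : ∀ x : ℕ → ℝ, IsMixed n x → pay n Z x yhat ≤ Z m := by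
    intro x hxm
    rw [hpayrow x]
    calc ∑ i ∈ Finset.range (n+1), x i * (if i ≤ m then Z m else Z i)
        ≤ ∑ i ∈ Finset.range (n+1), x i * Z m := by
          apply Finset.sum_le_sum
          intro i hi
          apply mul_le_mul_of_nonneg_left _ (hxm.1 i hi)
          by_cases him : i ≤ m
          · rw [if_pos him]
          · rw [if_neg him]
            exact hZle m i (by omega) (by simp at hi; omega)
      _ = Z m := by rw [← Finset.sum_mul, hxm.2, one_mul]
  -- payoff of (xhat, yhat)
  have hpayeq : pay n Z xhat yhat = Z m := by
    rw [hpayrow xhat]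
    have h2 : ∀ i ∈ Finset.range (n+1), xhat i * (if i ≤ m then Z m else Z i)
        = xhat i * Z m := by
      intro i _
      by_cases him : i ≤ m
      · rw [if_pos him]
      · rw [if_neg him, hx0 i (by omega), zero_mul, zero_mul]
    rw [Finset.sum_congr rfl h2, ← Finset.sum_mul, hxsum1, one_mul]
  -- telescoping sum of J increments
  have tel : ∀ a b : ℕ, a ≤ b → ∑ i ∈ Finset.Icc a b, (J (i+1) - J i) = J (b+1) - J a := by
    intro a b hab
    induction b, hab using Nat.le_induction with
    | base => simp
    | succ k hk ih =>
      rw [Finset.sum_Icc_succ_top (by omega), ih]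
      ring
  -- column sums against xhat
  have hcolX : ∀ j, j ≤ n →
      ∑ i ∈ Finset.range (n+1), xhat i * (if j ≤ i then Z i else 0)
        = if j ≤ m then Z m / D * (J (m+1) - J j) else 0 := by
    intro j hj
    by_cases hjm : j ≤ m
    · rw [if_pos hjm]
      have h1 : ∑ i ∈ Finset.range (n+1), xhat i * (if j ≤ i then Z i else 0)
          = ∑ i ∈ Finset.Icc j m, Z m / D * (J (i+1) - J i) := by
        rw [← Finset.sum_subset (show Finset.Icc j m ⊆ Finset.range (n+1) by
          intro i hi; simp only [Finset.mem_Icc] at hi; exact Finset.mem_range.mpr (by omega))]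
        · apply Finset.sum_congr rfl
          intro i hi
          simp only [Finset.mem_Icc] at hi
          rw [hx i, if_pos hi.2, if_pos hi.1]
          have hzi : Z i ≠ 0 := hZne i (by omega)
          field_simp
        · intro i hik hi
          simp only [Finset.mem_Icc, not_and_or, not_le] at hi
          rcases hi with h | h
          · rw [if_neg (by omega), mul_zero]
          · rw [hx0 i h, zero_mul]
      rw [h1, ← Finset.mul_sum, tel j m hjm]
    · rw [if_neg hjm]
      apply Finset.sum_eq_zero
      intro i hi
      by_cases hji : j ≤ i
      · rw [hx0 i (by omega), zero_mul]
      · rw [if_neg hji, mul_zero]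
  -- pay as sum over columns
  have hpaycol : ∀ y : ℕ → ℝ, pay n Z xhat y
      = ∑ j ∈ Finset.range (n+1),
          (∑ i ∈ Finset.range (n+1), xhat i * (if j ≤ i then Z i else 0)) * y j := by
    intro y
    unfold pay
    rw [Finset.sum_comm]
    apply Finset.sum_congr rfl
    intro j _
    rw [Finset.sum_mul]
  -- lower bound for pay against any feasible y
  have hpayge : ∀ y : ℕ → ℝ, YLE n J (JaveM m J Z) y → Z m ≤ pay n Z xhat y := by
    intro y hyle
    obtain ⟨⟨hynn', hysum'⟩, hpow⟩ := hyle
    rw [hpaycol y]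
    have h1 : ∑ j ∈ Finset.range (n+1),
          (∑ i ∈ Finset.range (n+1), xhat i * (if j ≤ i then Z i else 0)) * y j
        = ∑ j ∈ Finset.range (m+1), Z m / D * (J (m+1) * y j - y j * J j) := by
      rw [← Finset.sum_subset (Finset.range_subset_range.mpr (by omega : m+1 ≤ n+1))]
      · apply Finset.sum_congr rfl
        intro j hj
        simp only [Finset.mem_range, Nat.lt_succ_iff] at hj
        rw [hcolX j (by omega), if_pos hj]
        ring
      · intro j hjn hj
        simp only [Finset.mem_range, Nat.lt_succ_iff] at hjn hj
        rw [hcolX j (by omega), if_neg (by omega), zero_mul]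
    rw [h1, ← Finset.mul_sum]
    have hsplit : ∀ g : ℕ → ℝ, ∑ j ∈ Finset.range (n+1), g j
        = ∑ j ∈ Finset.range (m+1), g j + ∑ j ∈ Finset.Ico (m+1) (n+1), g j := by
      intro g
      rw [Finset.range_eq_Ico, Finset.range_eq_Ico]
      exact (Finset.sum_Ico_consecutive _ (by omega : 0 ≤ m+1) (by omega : m+1 ≤ n+1)).symm
    set s := ∑ j ∈ Finset.range (m+1), y j with hs
    set P := ∑ j ∈ Finset.range (m+1), y j * J j with hP
    have hsum_sub : ∑ j ∈ Finset.range (m+1), (J (m+1) * y j - y j * J j)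
        = J (m+1) * s - P := by
      rw [Finset.sum_sub_distrib, ← Finset.mul_sum]
    rw [hsum_sub]
    -- constraint manipulation
    have hsy : s + ∑ j ∈ Finset.Ico (m+1) (n+1), y j = 1 := by
      rw [hs, ← hsplit y, hysum']
    have hPQ : P + ∑ j ∈ Finset.Ico (m+1) (n+1), y j * J j ≤ JaveM m J Z := by
      rw [hP, ← hsplit (fun j => y j * J j)]
      exact hpow
    have hQ : (1 - s) * J (m+1) ≤ ∑ j ∈ Finset.Ico (m+1) (n+1), y j * J j := by
      have h3 : (1 - s) * J (m+1) = ∑ j ∈ Finset.Ico (m+1) (n+1), y j * J (m+1) := by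
        rw [← Finset.sum_mul]
        congr 1
        linarith
      rw [h3]
      apply Finset.sum_le_sum
      intro j hj
      simp only [Finset.mem_Ico] at hj
      exact mul_le_mul_of_nonneg_left (hJle (m+1) j hj.1 (by omega))
        (hynn' j (Finset.mem_range.mpr (by omega)))
    have hmain : D ≤ J (m+1) * s - P := by
      have : P ≤ JaveM m J Z - (1 - s) * J (m+1) := by linarith
      simp only [hD]
      nlinarith
    calc Z m = Z m / D * D := by rw [div_mul_cancel₀ _ hDne]
      _ ≤ Z m / D * (J (m+1) * s - P) := by
          apply mul_le_mul_of_nonneg_left hmain (div_nonneg hZm.le hDpos.le)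
  exact ⟨hxmixed, ⟨hymixed, le_of_eq havg⟩, hpayeq, hpayle, hpayge⟩
end

section
/- Fix 0 ≤ m < n and a real J_ave with J_{ave,m} ≤ J_ave < J_{ave,m+1}. Let a = (J_{m+1} − J_ave)/(J_{m+1} − J_{ave,m}) and define the jammer strategy ŷ by ŷ_0 = a·Z_m/Z_0, ŷ_j = a·Z_m·(Z_j^{−1} − Z_{j−1}^{−1}) for 1 ≤ j ≤ m, ŷ_{m+1} = (J_ave − J_{ave,m})/(J_{m+1} − J_{ave,m}), and ŷ_j = 0 for j > m+1. Then ŷ is a mixed strategy with average power Σ_{j=0}^n ŷ_j J_j = J_ave, and for every transmitter mixed strategy x, xᵀZŷ ≤ ((J_{m+1} − J_ave)/(J_{m+1} − J_{ave,m}))·Z_m. -/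
open Finset

lemma tele_sum (f : ℕ → ℝ) (k : ℕ) :
    ∑ j ∈ Finset.Icc 1 k, (f j - f (j - 1)) = f k - f 0 := by
  induction k with
  | zero => simp
  | succ k ih =>
    rw [Finset.sum_Icc_succ_top (Nat.le_add_left 1 k), ih]
    simp only [Nat.add_sub_cancel]
    ring

/-- for `0 ≤ m < n` and `J_{ave,m} ≤ J_ave < J_{ave,m+1}`, the strategy `ŷ`
(scaled by `a = (J_{m+1} - J_ave)/(J_{m+1} - J_{ave,m})` with extra mass at `m+1`) is a mixed
strategy of average power exactly `J_ave`, forcing expected payoff at most `a Z_m`. -/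
theorem stmt_8 (n : ℕ) (hn : 1 ≤ n) (J Z : ℕ → ℝ)
    (hJ0 : J 0 = 0) (hJmono : ∀ j < n, J j < J (j + 1))
    (hZanti : ∀ j < n, Z (j + 1) < Z j) (hZpos : 0 < Z n)
    (m : ℕ) (hm : m < n) (Jave : ℝ)
    (hJave1 : JaveM m J Z ≤ Jave) (hJave2 : Jave < JaveM (m + 1) J Z)
    (a : ℝ) (ha : a = (J (m + 1) - Jave) / (J (m + 1) - JaveM m J Z))
    (yhat : ℕ → ℝ)
    (hy : ∀ j, yhat j = if j = 0 then a * Z m / Z 0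
      else if j ≤ m then a * Z m * ((Z j)⁻¹ - (Z (j - 1))⁻¹)
      else if j = m + 1 then (Jave - JaveM m J Z) / (J (m + 1) - JaveM m J Z)
      else 0) :
    IsMixed n yhat ∧
    avgPow n J yhat = Jave ∧
    (∀ x : ℕ → ℝ, IsMixed n x →
      pay n Z x yhat ≤ (J (m + 1) - Jave) / (J (m + 1) - JaveM m J Z) * Z m) := by
  -- basic monotonicity facts
  have hZle : ∀ i j, i ≤ j → j ≤ n → Z j ≤ Z i := by
    intro i j hij hjn
    induction j, hij using Nat.le_induction with
    | base => exact le_rfl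
    | succ j hj ih =>
      have h1 : j < n := lt_of_lt_of_le (Nat.lt_succ_self j) hjn
      exact le_trans (hZanti j h1).le (ih h1.le)
  have hZpos' : ∀ i, i ≤ n → 0 < Z i := fun i hi => lt_of_lt_of_le hZpos (hZle i n hi le_rfl)
  have hJle : ∀ i j, i ≤ j → j ≤ n → J i ≤ J j := by
    intro i j hij hjn
    induction j, hij using Nat.le_induction with
    | base => exact le_rfl
    | succ j hj ih =>
      have h1 : j < n := lt_of_lt_of_le (Nat.lt_succ_self j) hjn
      exact le_trans (ih h1.le) (hJmono j h1).le
  have hJnonneg : ∀ j, j ≤ n → 0 ≤ J j := by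
    intro j hj
    rw [← hJ0]
    exact hJle 0 j (Nat.zero_le j) hj
  have hdiff_nonneg : ∀ j, 1 ≤ j → j ≤ n → 0 ≤ (Z j)⁻¹ - (Z (j - 1))⁻¹ := by
    intro j h1 h2
    rw [sub_nonneg]
    exact inv_anti₀ (hZpos' j h2) (hZle (j-1) j (Nat.sub_le j 1) h2)
  have htele : ∀ k, ∑ j ∈ Finset.Icc 1 k, ((Z j)⁻¹ - (Z (j - 1))⁻¹) = (Z k)⁻¹ - (Z 0)⁻¹ :=
    fun k => tele_sum (fun j => (Z j)⁻¹) k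
  have hZm : 0 < Z m := hZpos' m hm.le
  have hZ0 : 0 < Z 0 := hZpos' 0 (Nat.zero_le n)
  have hZm1 : 0 < Z (m + 1) := hZpos' (m+1) hm
  -- JaveM bounds
  have hJaveM_nonneg : 0 ≤ JaveM m J Z := by
    apply mul_nonneg hZm.le
    apply Finset.sum_nonneg
    intro j hj
    rw [Finset.mem_Icc] at hj
    have hjn : j ≤ n := le_trans hj.2 hm.le
    exact mul_nonneg (hdiff_nonneg j hj.1 hjn) (hJnonneg j hjn)
  have hJaveM_le : JaveM m J Z ≤ J m := by
    have hsum : ∑ j ∈ Finset.Icc 1 m, ((Z j)⁻¹ - (Z (j - 1))⁻¹) * J j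
        ≤ ∑ j ∈ Finset.Icc 1 m, ((Z j)⁻¹ - (Z (j - 1))⁻¹) * J m := by
      apply Finset.sum_le_sum
      intro j hj
      rw [Finset.mem_Icc] at hj
      have hjn : j ≤ n := le_trans hj.2 hm.le
      exact mul_le_mul_of_nonneg_left (hJle j m hj.2 hm.le) (hdiff_nonneg j hj.1 hjn)
    have h2 : ∑ j ∈ Finset.Icc 1 m, ((Z j)⁻¹ - (Z (j - 1))⁻¹) * J m
        = ((Z m)⁻¹ - (Z 0)⁻¹) * J m := by rw [← Finset.sum_mul, htele m]
    have h3 : JaveM m J Z ≤ Z m * (((Z m)⁻¹ - (Z 0)⁻¹) * J m) := by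
      unfold JaveM
      nlinarith [hsum, h2]
    have h4 : Z m * (((Z m)⁻¹ - (Z 0)⁻¹) * J m) = (1 - Z m / Z 0) * J m := by
      field_simp
    have h5 : 0 < Z m / Z 0 := div_pos hZm hZ0
    have hJm : 0 ≤ J m := hJnonneg m hm.le
    nlinarith [h3, h4, h5, hJm]
  have hD : 0 < J (m + 1) - JaveM m J Z := by
    have := hJmono m hm
    linarith [hJaveM_le]
  have hDne : J (m + 1) - JaveM m J Z ≠ 0 := ne_of_gt hD
  -- key recursion for JaveM (m+1)
  have hrec : Z m * JaveM (m + 1) J Z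
      = Z (m + 1) * JaveM m J Z + (Z m - Z (m + 1)) * J (m + 1) := by
    have h1 : JaveM (m + 1) J Z = Z (m + 1) *
        (∑ j ∈ Finset.Icc 1 m, ((Z j)⁻¹ - (Z (j - 1))⁻¹) * J j
          + ((Z (m + 1))⁻¹ - (Z m)⁻¹) * J (m + 1)) := by
      unfold JaveM
      rw [Finset.sum_Icc_succ_top (Nat.le_add_left 1 m)]
      simp only [Nat.add_sub_cancel]
    have h2 : Z m * (∑ j ∈ Finset.Icc 1 m, ((Z j)⁻¹ - (Z (j - 1))⁻¹) * J j) = JaveM m J Z := rfl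
    rw [h1, ← h2]
    have e1 : Z (m + 1) * (Z (m + 1))⁻¹ = 1 := mul_inv_cancel₀ (ne_of_gt hZm1)
    have e2 : Z m * (Z m)⁻¹ = 1 := mul_inv_cancel₀ (ne_of_gt hZm)
    linear_combination Z m * J (m + 1) * e1 - Z (m + 1) * J (m + 1) * e2
  -- Jave < JaveM (m+1) rephrased
  have hkey : Z (m + 1) * (J (m + 1) - JaveM m J Z) < Z m * (J (m + 1) - Jave) := by
    have := mul_lt_mul_of_pos_left hJave2 hZm
    nlinarith [hrec]
  have haZm : Z (m + 1) < a * Z m := by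
    rw [ha, div_mul_eq_mul_div, lt_div_iff₀ hD]
    nlinarith [hkey]
  have ha0 : 0 ≤ a := by
    rw [ha]
    apply div_nonneg _ hD.le
    nlinarith [haZm, hZm1, hZm, hD]
  -- partial sums
  set T : ℕ → ℝ := fun i => ∑ j ∈ Finset.range (i + 1), yhat j with hT
  have hTle : ∀ i, i ≤ m → T i = a * Z m * (Z i)⁻¹ := by
    intro i hi
    induction i with
    | zero =>
      show (∑ j ∈ Finset.range (0 + 1), yhat j) = _
      rw [Finset.sum_range_one, hy 0, if_pos rfl, div_eq_mul_inv]
    | succ i ih =>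
      have hi' : i ≤ m := le_trans (Nat.le_succ i) hi
      have : T (i + 1) = T i + yhat (i + 1) := Finset.sum_range_succ yhat (i + 1)
      rw [this, ih hi', hy (i + 1)]
      simp only [Nat.succ_ne_zero, if_false, if_pos hi, Nat.add_sub_cancel]
      ring
  have hTm : T m = a := by
    rw [hTle m le_rfl, mul_assoc, mul_inv_cancel₀ (ne_of_gt hZm), mul_one]
  have hym1 : yhat (m + 1) = (Jave - JaveM m J Z) / (J (m + 1) - JaveM m J Z) := by
    rw [hy (m + 1)]
    simp [Nat.succ_ne_zero, Nat.not_succ_le_self]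
  have hTm1 : T (m + 1) = 1 := by
    have : T (m + 1) = T m + yhat (m + 1) := Finset.sum_range_succ yhat (m + 1)
    rw [this, hTm, hym1, ha]
    field_simp
    ring
  have hTge : ∀ i, m + 1 ≤ i → T i = 1 := by
    intro i hi
    induction i, hi using Nat.le_induction with
    | base => exact hTm1
    | succ i hi ih =>
      have : T (i + 1) = T i + yhat (i + 1) := Finset.sum_range_succ yhat (i + 1)
      have hz : yhat (i + 1) = 0 := by
        rw [hy (i + 1)]
        have h1 : ¬ (i + 1 = 0) := Nat.succ_ne_zero i
        have h2 : ¬ (i + 1 ≤ m) := by omega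
        have h3 : ¬ (i + 1 = m + 1) := by omega
        simp [h1, h2, h3, show ¬ (i = m) by omega]
      rw [this, ih, hz, add_zero]
  -- nonnegativity
  have hynonneg : ∀ j, 0 ≤ yhat j := by
    intro j
    rw [hy j]
    by_cases h0 : j = 0
    · simp only [h0, if_true]
      exact div_nonneg (mul_nonneg ha0 hZm.le) hZ0.le
    · rw [if_neg h0]
      by_cases h1 : j ≤ m
      · rw [if_pos h1]
        have h1' : 1 ≤ j := Nat.one_le_iff_ne_zero.mpr h0
        exact mul_nonneg (mul_nonneg ha0 hZm.le) (hdiff_nonneg j h1' (le_trans h1 hm.le))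
      · rw [if_neg h1]
        by_cases h2 : j = m + 1
        · rw [if_pos h2]
          exact div_nonneg (by linarith) hD.le
        · rw [if_neg h2]
  have hmixed : IsMixed n yhat := by
    constructor
    · intro i _
      exact hynonneg i
    · exact hTge n hm
  refine ⟨hmixed, ?_, ?_⟩
  · -- average power
    have hsub : Finset.Icc 1 (m + 1) ⊆ Finset.range (n + 1) := by
      intro j hj
      rw [Finset.mem_Icc] at hj
      rw [Finset.mem_range]
      omega
    have hvanish : ∀ j ∈ Finset.range (n + 1), j ∉ Finset.Icc 1 (m + 1) → yhat j * J j = 0 := by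
      intro j _ hj
      rw [Finset.mem_Icc] at hj
      push_neg at hj
      by_cases h0 : j = 0
      · rw [h0, hJ0, mul_zero]
      · have h1 : 1 ≤ j := Nat.one_le_iff_ne_zero.mpr h0
        have h2 : m + 1 < j := hj h1
        have hz : yhat j = 0 := by
          rw [hy j]
          have g1 : ¬ (j = 0) := h0
          have g2 : ¬ (j ≤ m) := by omega
          have g3 : ¬ (j = m + 1) := by omega
          simp [g1, g2, g3]
        rw [hz, zero_mul]
    have step1 : avgPow n J yhat = ∑ j ∈ Finset.Icc 1 (m + 1), yhat j * J j :=
      (Finset.sum_subset hsub hvanish).symm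
    have step2 : ∑ j ∈ Finset.Icc 1 (m + 1), yhat j * J j
        = (∑ j ∈ Finset.Icc 1 m, yhat j * J j) + yhat (m + 1) * J (m + 1) :=
      Finset.sum_Icc_succ_top (Nat.le_add_left 1 m) _
    have step3 : ∑ j ∈ Finset.Icc 1 m, yhat j * J j = a * JaveM m J Z := by
      have : ∀ j ∈ Finset.Icc 1 m, yhat j * J j
          = a * (Z m * (((Z j)⁻¹ - (Z (j - 1))⁻¹) * J j)) := by
        intro j hj
        rw [Finset.mem_Icc] at hj
        have h0 : ¬ (j = 0) := by omega
        rw [hy j, if_neg h0, if_pos hj.2]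
        ring
      rw [Finset.sum_congr rfl this, ← Finset.mul_sum, ← Finset.mul_sum]
      rfl
    rw [step1, step2, step3, hym1, ha]
    field_simp
    ring
  · -- payoff bound
    intro x hx
    have hfilter : ∀ i, i ≤ n → Finset.filter (fun j => j ≤ i) (Finset.range (n + 1))
        = Finset.range (i + 1) := by
      intro i hi
      ext k
      simp only [Finset.mem_filter, Finset.mem_range]
      omega
    have hinner : ∀ i ∈ Finset.range (n + 1),
        ∑ j ∈ Finset.range (n + 1), x i * (if j ≤ i then Z i else 0) * yhat j
          = x i * (Z i * T i) := by
      intro i hi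
      rw [Finset.mem_range, Nat.lt_succ_iff] at hi
      have : ∀ j, x i * (if j ≤ i then Z i else 0) * yhat j
          = if j ≤ i then x i * Z i * yhat j else 0 := by
        intro j
        split <;> ring
      simp only [this]
      rw [Finset.sum_ite, Finset.sum_const_zero, add_zero, hfilter i hi, hT]
      rw [Finset.mul_sum]
      simp only [Finset.mul_sum]
      ring_nf
    have hbound : ∀ i, i ≤ n → Z i * T i ≤ a * Z m := by
      intro i hi
      by_cases h1 : i ≤ m
      · rw [hTle i h1]
        rw [show Z i * (a * Z m * (Z i)⁻¹) = a * Z m * (Z i * (Z i)⁻¹) by ring,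
          mul_inv_cancel₀ (ne_of_gt (hZpos' i hi)), mul_one]
      · push_neg at h1
        rw [hTge i h1, mul_one]
        calc Z i ≤ Z (m + 1) := hZle (m + 1) i h1 hi
          _ ≤ a * Z m := haZm.le
    have hxnn := hx.1
    have hxsum := hx.2
    unfold pay
    rw [Finset.sum_congr rfl hinner]
    calc ∑ i ∈ Finset.range (n + 1), x i * (Z i * T i)
        ≤ ∑ i ∈ Finset.range (n + 1), x i * (a * Z m) := by
          apply Finset.sum_le_sum
          intro i hi
          have hi' : i ≤ n := Nat.lt_succ_iff.mp (Finset.mem_range.mp hi)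
          exact mul_le_mul_of_nonneg_left (hbound i hi') (hxnn i hi)
      _ = a * Z m := by rw [← Finset.sum_mul, hxsum, one_mul]
      _ = (J (m + 1) - Jave) / (J (m + 1) - JaveM m J Z) * Z m := by rw [ha]
end

section
/- Fix 0 ≤ m < n and a real J_ave with J_{ave,m} ≤ J_ave < J_{ave,m+1}. Then the constrained game with jammer average-power budget J_ave has a Nash equilibrium whose value is V = ((J_{m+1} − J_ave)/(J_{m+1} − J_{ave,m}))·Z_m. Explicitly, with x̂_i = Z_m·(J_{i+1} − J_i)/((J_{m+1} − J_{ave,m})·Z_i) for 0 ≤ i ≤ m, x̂_i = 0 for i > m, and ŷ as follows — a = (J_{m+1} − J_ave)/(J_{m+1} − J_{ave,m}), ŷ_0 = a·Z_m/Z_0, ŷ_j = a·Z_m·(Z_j^{−1} − Z_{j−1}^{−1}) for 1 ≤ j ≤ m, ŷ_{m+1} = (J_ave − J_{ave,m})/(J_{m+1} − J_{ave,m}), ŷ_j = 0 for j > m+1 — one has ŷ ∈ Y_LE(J_ave), x̂ᵀZŷ = V, xᵀZŷ ≤ V for every mixed strategy x, and x̂ᵀZy ≥ V for every y ∈ Y_LE(J_ave).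 -/
open Finset

lemma aux_abel1 (J Z : ℕ → ℝ) (hJ0 : J 0 = 0) (m : ℕ) :
    ∑ i ∈ Finset.range (m+1), (J (i+1) - J i) * (Z i)⁻¹
      = J (m+1) * (Z m)⁻¹ - ∑ j ∈ Finset.Icc 1 m, ((Z j)⁻¹ - (Z (j-1))⁻¹) * J j := by
  induction m with
  | zero => simp [hJ0]
  | succ k ih =>
    rw [Finset.sum_range_succ, ih, Finset.sum_Icc_succ_top (by omega)]
    simp only [Nat.add_sub_cancel]
    ring

lemma aux_abel2 (J y : ℕ → ℝ) (m : ℕ) :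
    ∑ i ∈ Finset.range (m+1), (J (i+1) - J i) * ∑ j ∈ Finset.range (i+1), y j
      = ∑ j ∈ Finset.range (m+1), y j * (J (m+1) - J j) := by
  induction m with
  | zero => simp; ring
  | succ k ih =>
    rw [Finset.sum_range_succ, ih, Finset.sum_range_succ (fun j => y j * (J (k+1+1) - J j)),
      Finset.sum_range_succ y, mul_add, Finset.mul_sum, ← add_assoc, ← Finset.sum_add_distrib,
      show (∑ j ∈ Finset.range (k+1), (y j * (J (k+1) - J j) + (J (k+1+1) - J (k+1)) * y j))
        = ∑ j ∈ Finset.range (k+1), y j * (J (k+1+1) - J j) from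
        Finset.sum_congr rfl (fun j _ => by ring)]
    ring

lemma aux_mono (f : ℕ → ℝ) (n : ℕ) (h : ∀ j < n, f j < f (j+1)) :
    ∀ i j, i ≤ j → j ≤ n → f i ≤ f j := by
  intro i j hij hjn
  induction j, hij using Nat.le_induction with
  | base => exact le_rfl
  | succ j hij ih => exact le_trans (ih (by omega)) (le_of_lt (h j (by omega)))

lemma aux_icc_range (f : ℕ → ℝ) (m : ℕ) :
    ∑ j ∈ Finset.Icc 1 m, f j = ∑ j ∈ Finset.range m, f (j+1) := by
  induction m with
  | zero => simp
  | succ k ih => rw [Finset.sum_Icc_succ_top (by omega), ih, Finset.sum_range_succ]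

lemma aux_pay_eq (n : ℕ) (Z x y : ℕ → ℝ) :
    pay n Z x y = ∑ i ∈ Finset.range (n+1), x i * Z i * ∑ j ∈ Finset.range (i+1), y j := by
  unfold pay
  refine Finset.sum_congr rfl (fun i hi => ?_)
  simp only [Finset.mem_range] at hi
  rw [Finset.mul_sum, ← Finset.sum_subset (Finset.range_subset_range.mpr (by omega : i+1 ≤ n+1))]
  · exact Finset.sum_congr rfl fun j hj => by
      simp only [Finset.mem_range] at hj
      rw [if_pos (by omega)]
  · intro j hj hj'
    simp only [Finset.mem_range] at hj hj'
    rw [if_neg (by omega), mul_zero, zero_mul]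

set_option maxHeartbeats 2000000 in
/-- for `0 ≤ m < n` and `J_{ave,m} ≤ J_ave < J_{ave,m+1}`, the constrained game
with budget `J_ave` has the Nash equilibrium `(x̂, ŷ)` whose value is
`V = ((J_{m+1} - J_ave)/(J_{m+1} - J_{ave,m})) Z_m`. -/
theorem stmt_9 (n : ℕ) (hn : 1 ≤ n) (J Z : ℕ → ℝ)
    (hJ0 : J 0 = 0) (hJmono : ∀ j < n, J j < J (j + 1))
    (hZanti : ∀ j < n, Z (j + 1) < Z j) (hZpos : 0 < Z n)
    (m : ℕ) (hm : m < n) (Jave : ℝ)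
    (hJave1 : JaveM m J Z ≤ Jave) (hJave2 : Jave < JaveM (m + 1) J Z)
    (V a : ℝ)
    (hV : V = (J (m + 1) - Jave) / (J (m + 1) - JaveM m J Z) * Z m)
    (ha : a = (J (m + 1) - Jave) / (J (m + 1) - JaveM m J Z))
    (xhat yhat : ℕ → ℝ)
    (hx : ∀ i, xhat i = if i ≤ m then
      Z m * (J (i + 1) - J i) / ((J (m + 1) - JaveM m J Z) * Z i) else 0)
    (hy : ∀ j, yhat j = if j = 0 then a * Z m / Z 0
      else if j ≤ m then a * Z m * ((Z j)⁻¹ - (Z (j - 1))⁻¹)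
      else if j = m + 1 then (Jave - JaveM m J Z) / (J (m + 1) - JaveM m J Z)
      else 0) :
    IsMixed n xhat ∧
    YLE n J Jave yhat ∧
    pay n Z xhat yhat = V ∧
    (∀ x : ℕ → ℝ, IsMixed n x → pay n Z x yhat ≤ V) ∧
    (∀ y : ℕ → ℝ, YLE n J Jave y → V ≤ pay n Z xhat y) := by
  -- basic monotonicity facts
  have hJle : ∀ i j, i ≤ j → j ≤ n → J i ≤ J j := aux_mono J n hJmono
  have hZle : ∀ i j, i ≤ j → j ≤ n → Z j ≤ Z i := by
    intro i j hij hjn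
    have := aux_mono (fun k => -Z k) n (fun j hj => by simpa using hZanti j hj) i j hij hjn
    simpa using this
  have hZpos' : ∀ i, i ≤ n → 0 < Z i := fun i hi =>
    lt_of_lt_of_le hZpos (hZle i n hi le_rfl)
  have hZm : (0:ℝ) < Z m := hZpos' m (by omega)
  have hZm0 : Z m ≠ 0 := ne_of_gt hZm
  have hZm1 : (0:ℝ) < Z (m+1) := hZpos' (m+1) (by omega)
  have hMdef : JaveM m J Z = Z m * ∑ j ∈ Finset.Icc 1 m, ((Z j)⁻¹ - (Z (j-1))⁻¹) * J j := rfl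
  -- D = Z m * T with T > 0
  have hDT : J (m+1) - JaveM m J Z
      = Z m * ∑ i ∈ Finset.range (m+1), (J (i+1) - J i) * (Z i)⁻¹ := by
    rw [aux_abel1 J Z hJ0 m, hMdef, mul_sub, ← mul_assoc, mul_comm (Z m) (J (m+1)),
      mul_assoc, mul_inv_cancel₀ hZm0, mul_one]
  have hTpos : 0 < ∑ i ∈ Finset.range (m+1), (J (i+1) - J i) * (Z i)⁻¹ := by
    apply Finset.sum_pos
    · intro i hi
      simp only [Finset.mem_range] at hi
      have h1 : J i < J (i+1) := hJmono i (by omega)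
      have h2 : (0:ℝ) < Z i := hZpos' i (by omega)
      exact mul_pos (by linarith) (inv_pos.mpr h2)
    · exact ⟨0, Finset.mem_range.mpr (by omega)⟩
  have hDpos : 0 < J (m+1) - JaveM m J Z := by
    rw [hDT]; exact mul_pos hZm hTpos
  have hD0 : J (m+1) - JaveM m J Z ≠ 0 := ne_of_gt hDpos
  -- relation between consecutive JaveM's
  have hEq : Z m * (J (m+1) - JaveM (m+1) J Z) = Z (m+1) * (J (m+1) - JaveM m J Z) := by
    rw [hMdef, JaveM, Finset.sum_Icc_succ_top (by omega : 1 ≤ m+1)]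
    simp only [Nat.add_sub_cancel]
    field_simp
    try ring
  have hkey : Z (m+1) * (J (m+1) - JaveM m J Z) < Z m * (J (m+1) - Jave) := by
    nlinarith [mul_lt_mul_of_pos_left hJave2 hZm]
  have hJaveJ : Jave < J (m+1) := by nlinarith [mul_pos hZm1 hDpos]
  have hapos : 0 < a := by rw [ha]; exact div_pos (by linarith) hDpos
  have hV' : V = a * Z m := by rw [hV, ha]
  have ha1 : a * (J (m+1) - JaveM m J Z) = J (m+1) - Jave := by
    rw [ha]; field_simp
  have hkey2 : Z (m+1) < a * Z m := by nlinarith [hkey, ha1, hDpos]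
  -- xhat facts
  have hxnn : ∀ i, 0 ≤ xhat i := by
    intro i
    rw [hx]
    split
    · next h =>
      have h1 : J i < J (i+1) := hJmono i (by omega)
      have h2 : (0:ℝ) < Z i := hZpos' i (by omega)
      exact div_nonneg (mul_nonneg (le_of_lt hZm) (by linarith))
        (le_of_lt (mul_pos hDpos h2))
    · exact le_rfl
  have hxsum_m : ∑ i ∈ Finset.range (m+1), xhat i = 1 := by
    have hcongr : ∀ i ∈ Finset.range (m+1), xhat i
        = Z m / (J (m+1) - JaveM m J Z) * ((J (i+1) - J i) * (Z i)⁻¹) := by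
      intro i hi
      simp only [Finset.mem_range] at hi
      rw [hx, if_pos (by omega)]
      have hZi : Z i ≠ 0 := ne_of_gt (hZpos' i (by omega))
      field_simp
      try ring
    rw [Finset.sum_congr rfl hcongr, ← Finset.mul_sum, div_mul_eq_mul_div, ← hDT]
    exact div_self hD0
  have hxsum : ∑ i ∈ Finset.range (n+1), xhat i = 1 := by
    rw [← Finset.sum_subset (Finset.range_subset_range.mpr (by omega : m+1 ≤ n+1))
      (fun i _ hi => by
        simp only [Finset.mem_range] at hi
        rw [hx, if_neg (by omega)])]
    exact hxsum_m
  have hxmixed : IsMixed n xhat := ⟨fun i _ => hxnn i, hxsum⟩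
  -- yhat facts
  have hynn : ∀ j, 0 ≤ yhat j := by
    intro j
    rw [hy]
    split
    · exact div_nonneg (mul_nonneg (le_of_lt hapos) (le_of_lt hZm))
        (le_of_lt (hZpos' 0 (by omega)))
    · split
      · next h0 hjm =>
        have h1 : (0:ℝ) < Z j := hZpos' j (by omega)
        have h2 : Z j ≤ Z (j-1) := hZle (j-1) j (by omega) (by omega)
        have h3 : (Z (j-1))⁻¹ ≤ (Z j)⁻¹ := by
          apply inv_anti₀ h1 h2
        exact mul_nonneg (mul_nonneg (le_of_lt hapos) (le_of_lt hZm)) (by linarith)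
      · split
        · exact div_nonneg (by linarith) (le_of_lt hDpos)
        · exact le_rfl
  have hy0 : ∀ j, m+2 ≤ j → yhat j = 0 := by
    intro j hj
    rw [hy, if_neg (by omega), if_neg (by omega), if_neg (by omega)]
  have hyPm : ∀ i, i ≤ m → ∑ j ∈ Finset.range (i+1), yhat j = a * Z m * (Z i)⁻¹ := by
    intro i
    induction i with
    | zero =>
      intro _
      rw [Finset.sum_range_one, hy, if_pos rfl, div_eq_mul_inv]
    | succ k ih =>
      intro hk
      rw [Finset.sum_range_succ, ih (by omega), hy, if_neg (by omega), if_pos (by omega)]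
      simp only [Nat.add_sub_cancel]
      ring
  have hyPm2 : ∑ j ∈ Finset.range (m+2), yhat j = 1 := by
    rw [Finset.sum_range_succ, hyPm m le_rfl, hy, if_neg (by omega), if_neg (by omega),
      if_pos rfl, mul_assoc, mul_inv_cancel₀ hZm0, mul_one]
    field_simp
    linarith [ha1]
  have hyP1 : ∀ i, m+1 ≤ i → i ≤ n → ∑ j ∈ Finset.range (i+1), yhat j = 1 := by
    intro i hi1 hi2
    rw [← Finset.sum_subset (Finset.range_subset_range.mpr (by omega : m+2 ≤ i+1))
      (fun j _ hj => by
        simp only [Finset.mem_range] at hj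
        exact hy0 j (by omega))]
    exact hyPm2
  have hysum : ∑ j ∈ Finset.range (n+1), yhat j = 1 := hyP1 n (by omega) le_rfl
  -- average power of yhat equals Jave
  have hsum1 : ∑ j ∈ Finset.range m, yhat (j+1) * J (j+1)
      = a * Z m * ∑ j ∈ Finset.range m, ((Z (j+1))⁻¹ - (Z j)⁻¹) * J (j+1) := by
    rw [Finset.mul_sum]
    refine Finset.sum_congr rfl (fun j hj => ?_)
    simp only [Finset.mem_range] at hj
    rw [hy, if_neg (by omega), if_pos (by omega)]
    simp only [Nat.add_sub_cancel]
    ring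
  have hsum2 : ∑ j ∈ Finset.range m, ((Z (j+1))⁻¹ - (Z j)⁻¹) * J (j+1)
      = ∑ j ∈ Finset.Icc 1 m, ((Z j)⁻¹ - (Z (j-1))⁻¹) * J j := by
    rw [aux_icc_range (fun j => ((Z j)⁻¹ - (Z (j-1))⁻¹) * J j) m]
    simp only [Nat.add_sub_cancel]
  have havg : avgPow n J yhat = Jave := by
    unfold avgPow
    rw [← Finset.sum_subset (Finset.range_subset_range.mpr (by omega : m+2 ≤ n+1))
      (fun j _ hj => by
        simp only [Finset.mem_range] at hj
        rw [hy0 j (by omega), zero_mul])]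
    rw [Finset.sum_range_succ, Finset.sum_range_succ' (fun j => yhat j * J j) m]
    rw [hJ0, mul_zero, add_zero, hsum1, hsum2, hy (m+1), if_neg (by omega),
      if_neg (by omega), if_pos rfl, mul_assoc, ← hMdef, ha]
    field_simp
    ring
  have hymixed : YLE n J Jave yhat :=
    ⟨⟨fun j _ => hynn j, hysum⟩, le_of_eq havg⟩
  -- pay of (xhat, yhat)
  have hpayhat : pay n Z xhat yhat = V := by
    rw [aux_pay_eq]
    have hcongr : ∀ i ∈ Finset.range (n+1),
        xhat i * Z i * ∑ j ∈ Finset.range (i+1), yhat j = xhat i * (a * Z m) := by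
      intro i hi
      simp only [Finset.mem_range] at hi
      by_cases h : i ≤ m
      · rw [hyPm i h]
        have hZi : Z i ≠ 0 := ne_of_gt (hZpos' i (by omega))
        field_simp
      · rw [hx, if_neg h, zero_mul, zero_mul, zero_mul]
    rw [Finset.sum_congr rfl hcongr, ← Finset.sum_mul, hxsum, one_mul, hV']
  -- upper bound for any mixed x
  have hub : ∀ x : ℕ → ℝ, IsMixed n x → pay n Z x yhat ≤ V := by
    intro x hxm
    rw [aux_pay_eq, hV']
    calc ∑ i ∈ Finset.range (n+1), x i * Z i * ∑ j ∈ Finset.range (i+1), yhat j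
        ≤ ∑ i ∈ Finset.range (n+1), x i * (a * Z m) := by
          refine Finset.sum_le_sum (fun i hi => ?_)
          simp only [Finset.mem_range] at hi
          have hxi : 0 ≤ x i := hxm.1 i (Finset.mem_range.mpr (by omega))
          by_cases h : i ≤ m
          · rw [hyPm i h]
            apply le_of_eq
            have hZi : Z i ≠ 0 := ne_of_gt (hZpos' i (by omega))
            field_simp
          · rw [hyP1 i (by omega) (by omega), mul_one]
            have h1 : Z i ≤ Z (m+1) := hZle (m+1) i (by omega) (by omega)
            exact mul_le_mul_of_nonneg_left (by linarith) hxi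
      _ = a * Z m := by rw [← Finset.sum_mul, hxm.2, one_mul]
  -- lower bound for any feasible y
  have hlb : ∀ y : ℕ → ℝ, YLE n J Jave y → V ≤ pay n Z xhat y := by
    intro y hyf
    obtain ⟨⟨hynn', hysum'⟩, hpow⟩ := hyf
    unfold avgPow at hpow
    rw [aux_pay_eq, hV']
    have hstep : ∑ i ∈ Finset.range (n+1), xhat i * Z i * ∑ j ∈ Finset.range (i+1), y j
        = Z m / (J (m+1) - JaveM m J Z)
          * ∑ i ∈ Finset.range (m+1), (J (i+1) - J i) * ∑ j ∈ Finset.range (i+1), y j := by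
      rw [Finset.mul_sum,
        ← Finset.sum_subset (Finset.range_subset_range.mpr (by omega : m+1 ≤ n+1))
        (fun i _ hi => by
          simp only [Finset.mem_range] at hi
          rw [hx, if_neg (by omega), zero_mul, zero_mul])]
      refine Finset.sum_congr rfl (fun i hi => ?_)
      simp only [Finset.mem_range] at hi
      rw [hx, if_pos (by omega)]
      have hZi : Z i ≠ 0 := ne_of_gt (hZpos' i (by omega))
      field_simp
    rw [hstep, aux_abel2 J y m]
    -- split sums at m+1
    have hsplit1 := Finset.sum_Ico_consecutive (fun j => y j)
      (by omega : 0 ≤ m+1) (by omega : m+1 ≤ n+1)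
    have hsplit2 := Finset.sum_Ico_consecutive (fun j => y j * J j)
      (by omega : 0 ≤ m+1) (by omega : m+1 ≤ n+1)
    simp only [← Finset.range_eq_Ico] at hsplit1 hsplit2
    rw [hysum'] at hsplit1
    have hB : J (m+1) * ∑ j ∈ Finset.Ico (m+1) (n+1), y j
        ≤ ∑ j ∈ Finset.Ico (m+1) (n+1), y j * J j := by
      rw [Finset.mul_sum]
      refine Finset.sum_le_sum (fun j hj => ?_)
      simp only [Finset.mem_Ico] at hj
      have h1 : 0 ≤ y j := hynn' j (Finset.mem_range.mpr (by omega))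
      have h2 : J (m+1) ≤ J j := hJle (m+1) j (by omega) (by omega)
      nlinarith
    have hW : ∑ j ∈ Finset.range (m+1), y j * (J (m+1) - J j)
        = J (m+1) * ∑ j ∈ Finset.range (m+1), y j
          - ∑ j ∈ Finset.range (m+1), y j * J j := by
      rw [Finset.mul_sum, ← Finset.sum_sub_distrib]
      exact Finset.sum_congr rfl fun j _ => by ring
    have hJPQ : J (m+1) * ∑ j ∈ Finset.range (m+1), y j
        = J (m+1) - J (m+1) * ∑ j ∈ Finset.Ico (m+1) (n+1), y j := by
      linear_combination (J (m+1)) * hsplit1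
    have hWge : J (m+1) - Jave ≤ ∑ j ∈ Finset.range (m+1), y j * (J (m+1) - J j) := by
      rw [hW, hJPQ]
      linarith [hB, hsplit2, hpow]
    rw [ha, div_mul_eq_mul_div, div_mul_eq_mul_div, div_le_div_iff₀ hDpos hDpos]
    nlinarith [mul_nonneg (mul_nonneg (sub_nonneg.mpr hWge) hZm.le) hDpos.le]
  exact ⟨hxmixed, hymixed, hpayhat, hub, hlb⟩
end

section
/- Define the jamming threshold J_TH = Z_n·Σ_{j=1}^n (Z_j^{−1} − Z_{j−1}^{−1})·J_j. Then J_TH < J_max; the jammer strategy y* defined by y*_0 = Z_n/Z_0 and y*_j = Z_n·(Z_j^{−1} − Z_{j−1}^{−1}) for 1 ≤ j ≤ n is a mixed strategy with average power Σ_{j=0}^n y*_j J_j = J_TH; for every transmitter mixed strategy x, xᵀZy* ≤ Z_n; and for the pure transmitter strategy x* = e_n (the unit vector at index n) and every jammer mixed strategy y, x*ᵀZy = Z_n. Consequently, for every J_ave ≥ J_TH the value of the constrained game with budget J_ave equals Z_n. -/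
open Finset

private lemma icc_shift (f : ℕ → ℝ) (m : ℕ) :
    ∑ j ∈ Finset.Icc 1 m, f j = ∑ j ∈ Finset.range m, f (j + 1) := by
  induction m with
  | zero => simp
  | succ k ih => rw [Finset.sum_Icc_succ_top (by omega), ih, Finset.sum_range_succ]

/-- the jamming threshold `J_TH = Z_n ∑_{j=1}^n (Z_j⁻¹ - Z_{j-1}⁻¹) J_j`
satisfies `J_TH < J_max`; the strategy `y*` is mixed with average power `J_TH` and forces
payoff at most `Z_n`; the pure strategy `x* = e_n` guarantees exactly `Z_n`; hence for every
budget `J_ave ≥ J_TH` the value of the constrained game equals `Z_n`. -/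
theorem stmt_10 (n : ℕ) (hn : 1 ≤ n) (J Z : ℕ → ℝ)
    (hJ0 : J 0 = 0) (hJmono : ∀ j < n, J j < J (j + 1))
    (hZanti : ∀ j < n, Z (j + 1) < Z j) (hZpos : 0 < Z n)
    (JTH : ℝ)
    (hT : JTH = Z n * ∑ j ∈ Finset.Icc 1 n, ((Z j)⁻¹ - (Z (j - 1))⁻¹) * J j)
    (ystar xstar : ℕ → ℝ)
    (hys : ∀ j, ystar j = if j = 0 then Z n / Z 0
      else if j ≤ n then Z n * ((Z j)⁻¹ - (Z (j - 1))⁻¹) else 0)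
    (hxs : ∀ i, xstar i = if i = n then 1 else 0) :
    JTH < J n ∧
    IsMixed n ystar ∧
    avgPow n J ystar = JTH ∧
    (∀ x : ℕ → ℝ, IsMixed n x → pay n Z x ystar ≤ Z n) ∧
    (∀ y : ℕ → ℝ, IsMixed n y → pay n Z xstar y = Z n) ∧
    (∀ Jave : ℝ, JTH ≤ Jave →
      ∃ xs ys : ℕ → ℝ, IsMixed n xs ∧ YLE n J Jave ys ∧
        pay n Z xs ys = Z n ∧
        (∀ x : ℕ → ℝ, IsMixed n x → pay n Z x ys ≤ Z n) ∧
        (∀ y : ℕ → ℝ, YLE n J Jave y → Z n ≤ pay n Z xs y)) := by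
  -- Z is decreasing up to n
  have hZle : ∀ i j : ℕ, i ≤ j → j ≤ n → Z j ≤ Z i := by
    intro i j hij hjn
    induction j with
    | zero => interval_cases i; exact le_refl _
    | succ m ih =>
      rcases Nat.eq_or_lt_of_le hij with h | h
      · rw [h]
      · exact le_trans (le_of_lt (hZanti m (by omega)))
          (ih (Nat.lt_succ_iff.mp h) (by omega))
  have hZp : ∀ i : ℕ, i ≤ n → 0 < Z i := fun i hi =>
    lt_of_lt_of_le hZpos (hZle i n hi le_rfl)
  have hJle : ∀ i j : ℕ, i ≤ j → j ≤ n → J i ≤ J j := by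
    intro i j hij hjn
    induction j with
    | zero => interval_cases i; exact le_refl _
    | succ m ih =>
      rcases Nat.eq_or_lt_of_le hij with h | h
      · rw [h]
      · exact le_trans (ih (Nat.lt_succ_iff.mp h) (by omega))
          (le_of_lt (hJmono m (by omega)))
  have hJn : 0 < J n := by
    have h01 : J 0 < J 1 := hJmono 0 (by omega)
    have h1n : J 1 ≤ J n := hJle 1 n hn le_rfl
    linarith
  -- telescoping sum
  have tel : ∀ m : ℕ, ∑ j ∈ Finset.range m, ((Z (j + 1))⁻¹ - (Z j)⁻¹)
      = (Z m)⁻¹ - (Z 0)⁻¹ := fun m => Finset.sum_range_sub (fun j => (Z j)⁻¹) m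
  -- partial sums of ystar
  have hys0 : ystar 0 = Z n / Z 0 := by rw [hys]; simp
  have hysS : ∀ j : ℕ, j + 1 ≤ n → ystar (j + 1) = Z n * ((Z (j + 1))⁻¹ - (Z j)⁻¹) := by
    intro j hj
    rw [hys]
    rw [if_neg (by omega), if_pos hj]
    simp
  have hsum : ∀ i : ℕ, i ≤ n → ∑ j ∈ Finset.range (i + 1), ystar j = Z n / Z i := by
    intro i hi
    rw [Finset.sum_range_succ']
    have hj : ∀ j ∈ Finset.range i, ystar (j + 1) = Z n * ((Z (j + 1))⁻¹ - (Z j)⁻¹) := by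
      intro j hjm
      exact hysS j (by have := Finset.mem_range.mp hjm; omega)
    rw [Finset.sum_congr rfl hj, ← Finset.mul_sum, tel, hys0]
    have hZi := (hZp i hi).ne'
    have hZ0 := (hZp 0 (by omega)).ne'
    field_simp
    ring
  -- ystar nonneg
  have ynn : ∀ j : ℕ, 0 ≤ ystar j := by
    intro j
    rw [hys]
    split_ifs with h1 h2
    · exact div_nonneg hZpos.le (hZp 0 (by omega)).le
    · have hj1 : 1 ≤ j := by omega
      have hjm : Z j < Z (j - 1) := by
        have := hZanti (j - 1) (by omega)
        rwa [Nat.sub_add_cancel hj1] at this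
      have hinv : (Z (j - 1))⁻¹ < (Z j)⁻¹ :=
        inv_strictAnti₀ (hZp j h2) hjm
      nlinarith
    · exact le_refl _
  have hmix : IsMixed n ystar := by
    constructor
    · exact fun j _ => ynn j
    · rw [hsum n le_rfl, div_self hZpos.ne']
  -- average power
  have hIcc : ∑ j ∈ Finset.Icc 1 n, ((Z j)⁻¹ - (Z (j - 1))⁻¹) * J j
      = ∑ j ∈ Finset.range n, ((Z (j + 1))⁻¹ - (Z j)⁻¹) * J (j + 1) := by
    rw [icc_shift (fun j => ((Z j)⁻¹ - (Z (j - 1))⁻¹) * J j) n]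
    exact Finset.sum_congr rfl fun j _ => by simp
  have havg : avgPow n J ystar = JTH := by
    rw [avgPow, Finset.sum_range_succ', hys0, hJ0, mul_zero, add_zero, hT, hIcc,
      Finset.mul_sum]
    refine Finset.sum_congr rfl fun j hjm => ?_
    rw [hysS j (by have := Finset.mem_range.mp hjm; omega)]
    ring
  -- payoff reformulation
  have hpay : ∀ x y : ℕ → ℝ, pay n Z x y
      = ∑ i ∈ Finset.range (n + 1), x i * Z i * ∑ j ∈ Finset.range (i + 1), y j := by
    intro x y
    rw [pay]
    refine Finset.sum_congr rfl fun i hi => ?_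
    have hin : i ≤ n := Nat.lt_succ_iff.mp (Finset.mem_range.mp hi)
    have hterm : ∀ j : ℕ, x i * (if j ≤ i then Z i else 0) * y j
        = if j ≤ i then x i * Z i * y j else 0 := by
      intro j; split_ifs <;> ring
    have hfe : Finset.filter (fun j => j ≤ i) (Finset.range (n + 1))
        = Finset.range (i + 1) := by
      ext a; simp only [Finset.mem_filter, Finset.mem_range]; omega
    simp_rw [hterm]
    rw [← Finset.sum_filter, hfe, Finset.mul_sum]
  -- pay against ystar is exactly Z n for all mixed x
  have hforce : ∀ x : ℕ → ℝ, IsMixed n x → pay n Z x ystar = Z n := by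
    intro x hx
    rw [hpay]
    have h1 : ∀ i ∈ Finset.range (n + 1),
        x i * Z i * ∑ j ∈ Finset.range (i + 1), ystar j = x i * Z n := by
      intro i hi
      have hin : i ≤ n := Nat.lt_succ_iff.mp (Finset.mem_range.mp hi)
      rw [hsum i hin]
      field_simp [(hZp i hin).ne']
    rw [Finset.sum_congr rfl h1, ← Finset.sum_mul, hx.2, one_mul]
  -- pay of xstar against any mixed y
  have hguar : ∀ y : ℕ → ℝ, IsMixed n y → pay n Z xstar y = Z n := by
    intro y hy
    rw [hpay, Finset.sum_eq_single n]
    · rw [hxs, if_pos rfl, hy.2]; ring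
    · intro i _ hne; rw [hxs, if_neg hne]; ring
    · intro h; exact absurd (Finset.self_mem_range_succ n) h
  -- threshold below J n
  have hlt : JTH < J n := by
    rw [← havg, avgPow]
    have hb : ∑ j ∈ Finset.range (n + 1), ystar j * J j
        < ∑ j ∈ Finset.range (n + 1), ystar j * J n := by
      refine Finset.sum_lt_sum (fun j hj => ?_) ⟨0, Finset.mem_range.mpr (by omega), ?_⟩
      · have hjn : j ≤ n := Nat.lt_succ_iff.mp (Finset.mem_range.mp hj)
        exact mul_le_mul_of_nonneg_left (hJle j n hjn le_rfl) (ynn j)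
      · rw [hJ0, mul_zero, hys0]
        have h0 : 0 < Z n / Z 0 := div_pos hZpos (hZp 0 (by omega))
        positivity
    calc ∑ j ∈ Finset.range (n + 1), ystar j * J j
        < ∑ j ∈ Finset.range (n + 1), ystar j * J n := hb
      _ = J n := by rw [← Finset.sum_mul, hmix.2, one_mul]
  have hxmix : IsMixed n xstar := by
    constructor
    · intro i _
      rw [hxs]; split_ifs <;> norm_num
    · have : ∀ i ∈ Finset.range (n + 1), xstar i = if i = n then 1 else 0 :=
        fun i _ => hxs i
      rw [Finset.sum_congr rfl this, Finset.sum_ite_eq' (Finset.range (n + 1)) n fun _ => (1:ℝ)]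
      rw [if_pos (Finset.self_mem_range_succ n)]
  refine ⟨hlt, hmix, havg, fun x hx => (hforce x hx).le, hguar, fun Jave hJave => ?_⟩
  exact ⟨xstar, ystar, hxmix, ⟨hmix, by rw [havg]; exact hJave⟩, hguar ystar hmix,
    fun x hx => (hforce x hx).le, fun y hy => (hguar y hy.1).ge⟩
end

section
/- For every 1 ≤ m ≤ n, the average power J_{ave,m} of the jammer's optimal mixed strategy is strictly smaller than the corresponding effective pure jamming power J_m: J_{ave,m} = Z_m·Σ_{j=1}^m (Z_j^{−1} − Z_{j−1}^{−1})·J_j < J_m. -/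
open Finset

/-- for every `1 ≤ m ≤ n`, the optimal average jamming power `J_{ave,m}` is
strictly smaller than the effective pure jamming power `J_m`. -/
theorem stmt_11 (n : ℕ) (hn : 1 ≤ n) (J Z : ℕ → ℝ)
    (hJ0 : J 0 = 0) (hJmono : ∀ j < n, J j < J (j + 1))
    (hZanti : ∀ j < n, Z (j + 1) < Z j) (hZpos : 0 < Z n)
    (m : ℕ) (hm1 : 1 ≤ m) (hm2 : m ≤ n) :
    JaveM m J Z < J m := by
  -- positivity of Z on [0,n]
  have hZk : ∀ k : ℕ, 0 < Z (n - k) := by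
    intro k
    induction k with
    | zero => simpa using hZpos
    | succ k ih =>
      rcases Nat.lt_or_ge k n with h | h
      · have h1 : n - (k + 1) < n := by omega
        have := hZanti _ h1
        have h2 : n - (k + 1) + 1 = n - k := by omega
        rw [h2] at this
        linarith
      · have : n - (k + 1) = n - k := by omega
        rw [this]; exact ih
  have hZp : ∀ j ≤ n, 0 < Z j := by
    intro j hj
    have : j = n - (n - j) := by omega
    rw [this]; exact hZk _
  -- Z antitone (adjacent inverse inequality)
  have hinv : ∀ j, 1 ≤ j → j ≤ n → (Z j)⁻¹ - (Z (j - 1))⁻¹ ≥ 0 := by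
    intro j hj1 hjn
    have h1 : Z j < Z (j - 1) := by
      have := hZanti (j - 1) (by omega)
      have e : j - 1 + 1 = j := by omega
      rwa [e] at this
    have hpj := hZp j hjn
    have hpj1 := hZp (j - 1) (by omega)
    have := one_div_le_one_div_of_le hpj (le_of_lt h1)
    simp only [one_div] at this
    linarith
  -- J monotone
  have hJle : ∀ i j, i ≤ j → j ≤ n → J i ≤ J j := by
    intro i j hij hjn
    induction j with
    | zero => simp_all
    | succ j ih =>
      rcases Nat.lt_or_ge i (j + 1) with h | h
      · have := hJmono j (by omega)
        have := ih (by omega) (by omega)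
        linarith
      · have : i = j + 1 := by omega
        simp [this]
  have hJmpos : 0 < J m := by
    have h01 : J 0 < J 1 := hJmono 0 (by omega)
    have := hJle 1 m hm1 hm2
    linarith
  -- bound each term by using J j ≤ J m
  have hsum : ∑ j ∈ Finset.Icc 1 m, ((Z j)⁻¹ - (Z (j - 1))⁻¹) * J j ≤
      ∑ j ∈ Finset.Icc 1 m, ((Z j)⁻¹ - (Z (j - 1))⁻¹) * J m := by
    apply Finset.sum_le_sum
    intro j hj
    simp only [Finset.mem_Icc] at hj
    exact mul_le_mul_of_nonneg_left (hJle j m hj.2 hm2) (hinv j hj.1 (le_trans hj.2 hm2))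
  -- telescoping
  have htel : ∑ j ∈ Finset.Icc 1 m, ((Z j)⁻¹ - (Z (j - 1))⁻¹) * J m =
      ((Z m)⁻¹ - (Z 0)⁻¹) * J m := by
    rw [← Finset.sum_mul]
    congr 1
    have h1 : ∑ j ∈ Finset.Icc 1 m, ((Z j)⁻¹ - (Z (j - 1))⁻¹) =
        ∑ i ∈ Finset.range m, ((Z (i + 1))⁻¹ - (Z i)⁻¹) := by
      rw [Finset.range_eq_Ico, ← Finset.Ico_add_one_right_eq_Icc]
      rw [Finset.sum_Ico_eq_sum_range]
      simp [Nat.add_comm]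
    rw [h1, Finset.sum_range_sub (fun i => (Z i)⁻¹)]
  have hZmpos := hZp m hm2
  have hZ0pos := hZp 0 (by omega)
  have hfinal : ((Z m)⁻¹ - (Z 0)⁻¹) * J m < (Z m)⁻¹ * J m := by
    have : 0 < (Z 0)⁻¹ * J m := mul_pos (inv_pos.mpr hZ0pos) hJmpos
    nlinarith
  unfold JaveM
  calc Z m * ∑ j ∈ Finset.Icc 1 m, ((Z j)⁻¹ - (Z (j - 1))⁻¹) * J j
      ≤ Z m * (((Z m)⁻¹ - (Z 0)⁻¹) * J m) := by
        rw [← htel]; exact mul_le_mul_of_nonneg_left hsum (le_of_lt hZmpos)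
    _ < Z m * ((Z m)⁻¹ * J m) := by
        exact mul_lt_mul_of_pos_left hfinal hZmpos
    _ = J m := by field_simp
end

section
/- The sequence of critical average jamming powers is strictly increasing: for every 0 ≤ m < n, J_{ave,m} < J_{ave,m+1}. Moreover, J_{ave,m+1} = (Z_{m+1}/Z_m)·J_{ave,m} + (1 − Z_{m+1}/Z_m)·J_{m+1}, i.e., J_{ave,m+1} is a strict convex combination of J_{ave,m} and J_{m+1}. -/
open Finset

lemma Jave_rec (m : ℕ) (J Z : ℕ → ℝ) (h1 : Z m ≠ 0) (h2 : Z (m+1) ≠ 0) :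
    JaveM (m + 1) J Z
      = Z (m + 1) / Z m * JaveM m J Z + (1 - Z (m + 1) / Z m) * J (m + 1) := by
  unfold JaveM
  rw [Finset.sum_Icc_succ_top (Nat.le_add_left 1 m)]
  simp only [Nat.add_sub_cancel]
  field_simp

/-- the critical average jamming powers are strictly increasing, and
`J_{ave,m+1}` is the strict convex combination
`(Z_{m+1}/Z_m) J_{ave,m} + (1 - Z_{m+1}/Z_m) J_{m+1}`. -/
theorem stmt_12 (n : ℕ) (hn : 1 ≤ n) (J Z : ℕ → ℝ)
    (hJ0 : J 0 = 0) (hJmono : ∀ j < n, J j < J (j + 1))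
    (hZanti : ∀ j < n, Z (j + 1) < Z j) (hZpos : 0 < Z n)
    (m : ℕ) (hm : m < n) :
    JaveM m J Z < JaveM (m + 1) J Z ∧
    JaveM (m + 1) J Z
      = Z (m + 1) / Z m * JaveM m J Z + (1 - Z (m + 1) / Z m) * J (m + 1) := by
  -- positivity of Z on [0, n]
  have hZanti' : ∀ j k, k ≤ n → j ≤ k → Z k ≤ Z j := by
    intro j k hk hjk
    induction k with
    | zero => simp_all
    | succ k ih =>
      rcases Nat.eq_or_lt_of_le hjk with h | h
      · simp [h]
      · exact le_trans (le_of_lt (hZanti k (Nat.lt_of_succ_le hk)))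
          (ih (le_trans (Nat.le_succ k) hk) (Nat.lt_succ_iff.mp h))
  have hZp : ∀ j, j ≤ n → 0 < Z j := fun j hj =>
    lt_of_lt_of_le hZpos (hZanti' j n le_rfl hj)
  -- JaveM m ≤ J m for all m ≤ n
  have key : ∀ m, m ≤ n → JaveM m J Z ≤ J m := by
    intro m
    induction m with
    | zero => intro _; simp [JaveM, hJ0]
    | succ m ih =>
      intro hm1
      have hmn : m < n := Nat.lt_of_succ_le hm1
      have hZm := hZp m (le_of_lt hmn)
      have hZm1 := hZp (m+1) hm1
      rw [Jave_rec m J Z (ne_of_gt hZm) (ne_of_gt hZm1)]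
      have hr0 : 0 < Z (m+1) / Z m := div_pos hZm1 hZm
      have hr1 : Z (m+1) / Z m < 1 := (div_lt_one hZm).mpr (hZanti m hmn)
      have hle : JaveM m J Z ≤ J (m+1) :=
        le_of_lt (lt_of_le_of_lt (ih (le_of_lt hmn)) (hJmono m hmn))
      nlinarith
  have hZm := hZp m (le_of_lt hm)
  have hZm1 := hZp (m+1) hm
  have hrec := Jave_rec m J Z (ne_of_gt hZm) (ne_of_gt hZm1)
  refine ⟨?_, hrec⟩
  rw [hrec]
  have hr1 : Z (m+1) / Z m < 1 := (div_lt_one hZm).mpr (hZanti m hm)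
  have hlt : JaveM m J Z < J (m+1) :=
    lt_of_le_of_lt (key m (le_of_lt hm)) (hJmono m hm)
  nlinarith
end

section
/- Let J_TH,U = (1/2)·((n+1)/n)·(1 − R_n/R_0)·J_max. Suppose J_ave satisfies J_TH,U ≤ J_ave ≤ ((n+1)/(2n))·J_max, and define the semi-uniform jammer strategy ẏ by ẏ_0 = 1 − (2n/(n+1))·(J_ave/J_max) and ẏ_j = (2/(n+1))·(J_ave/J_max) for 1 ≤ j ≤ n. Then ẏ is a mixed strategy with average power Σ_{j=0}^n ẏ_j·J_j = J_ave, and for every transmitter mixed strategy x, xᵀZẏ ≤ R_n. -/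
open Finset

private lemma pade_log {u : ℝ} (hu : 0 ≤ u) : 2 * u / (2 + u) ≤ Real.log (1 + u) := by
  have key : MonotoneOn (fun u : ℝ => Real.log (1 + u) - 2 * u / (2 + u)) (Set.Ici (0:ℝ)) := by
    apply monotoneOn_of_hasDerivWithinAt_nonneg (convex_Ici 0)
      (f' := fun x : ℝ => 1 / (1 + x) - 4 / (2 + x) ^ 2)
    · have c1 : ContinuousOn (fun u : ℝ => Real.log (1 + u)) (Set.Ici 0) :=
        (continuousOn_const.add continuousOn_id).log
          (fun x hx => by have : (0:ℝ) ≤ x := hx; show (1:ℝ) + x ≠ 0; positivity)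
      have c2 : ContinuousOn (fun u : ℝ => 2 * u / (2 + u)) (Set.Ici 0) :=
        (continuousOn_const.mul continuousOn_id).div
          (continuousOn_const.add continuousOn_id)
          (fun x hx => by have : (0:ℝ) ≤ x := hx; positivity)
      exact c1.sub c2
    · intro x hx
      rw [interior_Ici] at hx
      have hx0 : (0:ℝ) < x := hx
      have h1 : (1:ℝ) + x ≠ 0 := by positivity
      have h2 : (2:ℝ) + x ≠ 0 := by positivity
      have d1 : HasDerivAt (fun u : ℝ => Real.log (1 + u)) (1 / (1 + x)) x := by
        have := (((hasDerivAt_id x).const_add 1).log h1)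
        simpa using this
      have d2 : HasDerivAt (fun u : ℝ => 2 * u / (2 + u))
          ((2 * 1 * (2 + x) - 2 * x * 1) / (2 + x) ^ 2) x :=
        HasDerivAt.div ((hasDerivAt_id x).const_mul 2) ((hasDerivAt_id x).const_add 2) h2
      have d3 := d1.sub d2
      have e : (2 * 1 * (2 + x) - 2 * x * 1) = 4 := by ring
      rw [e] at d3
      exact d3.hasDerivWithinAt
    · intro x hx
      rw [interior_Ici] at hx
      have hx0 : (0:ℝ) < x := hx
      rw [sub_nonneg, div_le_div_iff₀ (by positivity) (by positivity)]
      nlinarith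
  have h0 := key (Set.self_mem_Ici) (Set.mem_Ici.2 hu) hu
  simp only [Real.log_one, add_zero, mul_zero, zero_div, sub_zero] at h0
  norm_num at h0
  linarith

private lemma concave_inv_log {P : ℝ} (hP : 0 < P) :
    ConcaveOn ℝ (Set.Ioi (0:ℝ))
      (fun s : ℝ => (Real.log (s + P) - Real.log s)⁻¹) := by
  have hL : ∀ s : ℝ, 0 < s → 0 < Real.log (s + P) - Real.log s := fun s hs =>
    sub_pos.2 (Real.log_lt_log hs (by linarith))
  apply concaveOn_of_hasDerivWithinAt2_nonpos (convex_Ioi 0)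
    (f' := fun s => P * ((s * (s + P))⁻¹ * (((Real.log (s + P) - Real.log s)) ^ 2)⁻¹))
    (f'' := fun s => P * (2 * P - (2 * s + P) * (Real.log (s + P) - Real.log s)) /
        (s ^ 2 * (s + P) ^ 2 * (Real.log (s + P) - Real.log s) ^ 3))
  · have c1 : ContinuousOn (fun s : ℝ => Real.log (s + P)) (Set.Ioi 0) :=
      (continuousOn_id.add continuousOn_const).log
        (fun x hx => by have : (0:ℝ) < x := hx; show x + P ≠ 0; positivity)
    have c2 : ContinuousOn (fun s : ℝ => Real.log s) (Set.Ioi 0) :=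
      continuousOn_id.log (fun x hx => (show (0:ℝ) < x from hx).ne')
    exact (c1.sub c2).inv₀ (fun x hx => (hL x hx).ne')
  · intro s hs
    rw [interior_Ioi] at hs
    have hs0 : (0:ℝ) < s := hs
    have h1 : s + P ≠ 0 := by positivity
    have dL : HasDerivAt (fun s : ℝ => Real.log (s + P) - Real.log s)
        (1 / (s + P) - s⁻¹) s := by
      have dl1 : HasDerivAt (fun s : ℝ => Real.log (s + P)) (1 / (s + P)) s := by
        have := ((hasDerivAt_id s).add_const P).log h1
        simpa using this
      exact dl1.sub (Real.hasDerivAt_log hs0.ne')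
    have df := dL.fun_inv (hL s hs0).ne'
    have : HasDerivAt (fun s : ℝ => (Real.log (s + P) - Real.log s)⁻¹)
        (P * ((s * (s + P))⁻¹ * (((Real.log (s + P) - Real.log s)) ^ 2)⁻¹)) s := by
      refine df.congr_deriv ?_
      have := (hL s hs0).ne'
      field_simp
      ring
    rw [interior_Ioi]
    exact this.hasDerivWithinAt
  · intro s hs
    rw [interior_Ioi] at hs
    have hs0 : (0:ℝ) < s := hs
    have h1 : s + P ≠ 0 := by positivity
    have hLpos := hL s hs0
    have dL : HasDerivAt (fun s : ℝ => Real.log (s + P) - Real.log s)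
        (1 / (s + P) - s⁻¹) s := by
      have dl1 : HasDerivAt (fun s : ℝ => Real.log (s + P)) (1 / (s + P)) s := by
        have := ((hasDerivAt_id s).add_const P).log h1
        simpa using this
      exact dl1.sub (Real.hasDerivAt_log hs0.ne')
    have q1 : HasDerivAt (fun s : ℝ => s * (s + P)) (1 * (s + P) + s * 1) s :=
      (hasDerivAt_id s).mul ((hasDerivAt_id s).add_const P)
    have q2 := q1.fun_inv (by positivity : s * (s + P) ≠ 0)
    have q3 : HasDerivAt (fun s : ℝ => (Real.log (s + P) - Real.log s) ^ 2)
        (2 * (Real.log (s + P) - Real.log s) ^ 1 * (1 / (s + P) - s⁻¹)) s := by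
      simpa using dL.fun_pow 2
    have q4 := q3.fun_inv (by positivity : (Real.log (s + P) - Real.log s) ^ 2 ≠ 0)
    have q5 := (q2.mul q4).const_mul P
    have q6 : HasDerivAt
        (fun s => P * ((s * (s + P))⁻¹ * (((Real.log (s + P) - Real.log s)) ^ 2)⁻¹))
        (P * (2 * P - (2 * s + P) * (Real.log (s + P) - Real.log s)) /
          (s ^ 2 * (s + P) ^ 2 * (Real.log (s + P) - Real.log s) ^ 3)) s := by
      refine q5.congr_deriv ?_
      have := hLpos.ne'
      field_simp
      ring
    rw [interior_Ioi]
    refine q6.hasDerivWithinAt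
  · intro s hs
    rw [interior_Ioi] at hs
    have hs0 : (0:ℝ) < s := hs
    have hLpos := hL s hs0
    have e3 : Real.log (1 + P / s) = Real.log (s + P) - Real.log s := by
      rw [show (1:ℝ) + P / s = (s + P) / s by field_simp,
        Real.log_div (by positivity) hs0.ne']
    have hp := pade_log (show (0:ℝ) ≤ P / s by positivity)
    have e4 : 2 * (P / s) / (2 + P / s) = 2 * P / (2 * s + P) := by
      have h2 : (2:ℝ) + P / s ≠ 0 := by positivity
      field_simp
    rw [e4, e3] at hp
    have hkey : 2 * P ≤ (Real.log (s + P) - Real.log s) * (2 * s + P) :=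
      (div_le_iff₀ (by positivity)).1 hp
    apply div_nonpos_of_nonpos_of_nonneg
    · nlinarith
    · positivity

private lemma gauss_sum (m : ℕ) : (∑ j ∈ Finset.range m, ((j:ℝ) + 1)) = m * (m + 1) / 2 := by
  induction m with
  | zero => simp
  | succ k ih => rw [Finset.sum_range_succ, ih]; push_cast; ring

/-- with AWGN rates `R_i = (1/2) ln(1 + P/(N + (i/n) J_max))`, equally spaced
jamming powers, and `J_TH,U ≤ J_ave ≤ ((n+1)/(2n)) J_max`, the semi-uniform jammer strategy
`ẏ` is a mixed strategy with average power exactly `J_ave` forcing payoff at most `R_n`. -/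
theorem stmt_14 (n : ℕ) (hn : 1 ≤ n) (P N Jmax : ℝ)
    (hP : 0 < P) (hN : 0 < N) (hJmax : 0 < Jmax)
    (J R : ℕ → ℝ)
    (hJ : ∀ j, J j = (j : ℝ) / n * Jmax)
    (hR : ∀ i, R i = 1 / 2 * Real.log (1 + P / (N + (i : ℝ) / n * Jmax)))
    (JTHU Jave : ℝ)
    (hU : JTHU = 1 / 2 * (((n : ℝ) + 1) / n) * (1 - R n / R 0) * Jmax)
    (hJave1 : JTHU ≤ Jave) (hJave2 : Jave ≤ ((n : ℝ) + 1) / (2 * n) * Jmax)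
    (ydot : ℕ → ℝ)
    (hy : ∀ j, ydot j = if j = 0 then 1 - 2 * (n : ℝ) / ((n : ℝ) + 1) * (Jave / Jmax)
      else if j ≤ n then 2 / ((n : ℝ) + 1) * (Jave / Jmax) else 0) :
    IsMixed n ydot ∧
    avgPow n J ydot = Jave ∧
    (∀ x : ℕ → ℝ, IsMixed n x → pay n R x ydot ≤ R n) := by
  have hn0 : (0:ℝ) < n := by exact_mod_cast hn
  obtain ⟨a, ha⟩ : ∃ a : ℝ, a = 2 / ((n:ℝ) + 1) * (Jave / Jmax) := ⟨_, rfl⟩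
  obtain ⟨t, ht⟩ : ∃ t : ℕ → ℝ, t = fun i : ℕ => N + (i:ℝ) / n * Jmax := ⟨_, rfl⟩
  have hs : ∀ i : ℕ, 0 < t i := fun i => by simp only [ht]; positivity
  have hRt : ∀ i : ℕ, R i = 1 / 2 * Real.log (1 + P / t i) := fun i => by
    simp only [ht]; exact hR i
  have hRpos : ∀ i : ℕ, 0 < R i := by
    intro i
    rw [hRt i]
    have h1 : (0:ℝ) < P / t i := div_pos hP (hs i)
    have := Real.log_pos (by linarith : (1:ℝ) < 1 + P / t i)
    linarith
  have hR0 : 0 < R 0 := hRpos 0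
  have hRn : 0 < R n := hRpos n
  have hRn0 : R n ≤ R 0 := by
    rw [hRt n, hRt 0]
    have h2 : t 0 ≤ t n := by
      simp only [ht]
      have : (0:ℝ) ≤ (n:ℝ) / n * Jmax := by positivity
      simp only [Nat.cast_zero, zero_div, zero_mul]
      linarith
    have h3 : P / t n ≤ P / t 0 := div_le_div_of_nonneg_left hP.le (hs 0) h2
    have h4 : (0:ℝ) < P / t n := div_pos hP (hs n)
    have := Real.log_le_log (show (0:ℝ) < 1 + P / t n by linarith)
      (show (1:ℝ) + P / t n ≤ 1 + P / t 0 by linarith)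
    linarith
  have h1R : (0:ℝ) ≤ 1 - R n / R 0 := by
    rw [sub_nonneg, div_le_one hR0]; exact hRn0
  have hJave0 : 0 ≤ Jave := by
    refine le_trans ?_ hJave1
    rw [hU]
    exact mul_nonneg (mul_nonneg (by positivity) h1R) hJmax.le
  have ha0 : 0 ≤ a := by
    rw [ha]; exact mul_nonneg (by positivity) (div_nonneg hJave0 hJmax.le)
  have hJ2 : Jave * (2 * (n:ℝ)) ≤ ((n:ℝ) + 1) * Jmax := by
    rw [div_mul_eq_mul_div, le_div_iff₀ (by positivity)] at hJave2
    exact hJave2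
  have hy0 : ydot 0 = 1 - (n:ℝ) * a := by rw [hy 0, if_pos rfl, ha]; ring
  have hyj : ∀ j : ℕ, 1 ≤ j → j ≤ n → ydot j = a := by
    intro j h1 h2
    rw [hy j, if_neg (by omega), if_pos h2, ha]
  have hna1 : (n:ℝ) * a ≤ 1 := by
    rw [ha, show (n:ℝ) * (2 / ((n:ℝ) + 1) * (Jave / Jmax))
        = Jave * (2 * (n:ℝ)) / (((n:ℝ) + 1) * Jmax) by field_simp,
      div_le_one (by positivity)]
    exact hJ2
  -- concavity consequences
  have conc := concave_inv_log hP
  have hfR : ∀ i : ℕ, Real.log (t i + P) - Real.log (t i) = 2 * R i := by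
    intro i
    have hti := (hs i).ne'
    have e : (1:ℝ) + P / t i = (t i + P) / t i := by field_simp
    rw [hRt i, e, Real.log_div (show t i + P ≠ 0 by nlinarith [hs i]) (hs i).ne']
    ring
  have perI : ∀ i : ℕ, i ≤ n → R i * (1 - (n:ℝ) * a + (i:ℝ) * a) ≤ R n := by
    intro i hi
    have hi' : (i:ℝ) ≤ (n:ℝ) := by exact_mod_cast hi
    have hcomb : (i:ℝ) / n * t n + (1 - (i:ℝ) / n) * t 0 = t i := by
      simp only [ht]; field_simp; ring
    have hgiv := conc.2 (hs n) (hs 0)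
      (show (0:ℝ) ≤ (i:ℝ) / n by positivity)
      (show (0:ℝ) ≤ 1 - (i:ℝ) / n by
        rw [sub_nonneg, div_le_one hn0]; exact hi')
      (by ring)
    simp only [smul_eq_mul] at hgiv
    rw [hcomb, hfR n, hfR 0, hfR i] at hgiv
    have hRi0 : R i ≠ 0 := (hRpos i).ne'
    have hR00 : R 0 ≠ 0 := hR0.ne'
    have hRnn : R n ≠ 0 := hRn.ne'
    have c0 : (0:ℝ) ≤ R i * ((n:ℝ) * (R 0 * R n)) * 2 :=
      mul_nonneg (mul_nonneg (hRpos i).le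
        (mul_nonneg hn0.le (mul_nonneg hR0.le hRn.le))) (by norm_num)
    have h2 := mul_le_mul_of_nonneg_right hgiv c0
    have e1 : ((i:ℝ) / n * (2 * R n)⁻¹ + (1 - (i:ℝ) / n) * (2 * R 0)⁻¹) *
        (R i * ((n:ℝ) * (R 0 * R n)) * 2)
        = (i:ℝ) * (R 0 * R i) + ((n:ℝ) - (i:ℝ)) * (R n * R i) := by
      field_simp
    have e2 : (2 * R i)⁻¹ * (R i * ((n:ℝ) * (R 0 * R n)) * 2) = (n:ℝ) * (R 0 * R n) := by
      field_simp
    rw [e1, e2] at h2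
    -- threshold inequality, cleared
    have h5 : 1 / 2 * (((n:ℝ) + 1) / n) * (1 - R n / R 0) * Jmax ≤ Jave := hU ▸ hJave1
    have haRa : R 0 - R n ≤ (n:ℝ) * R 0 * a := by
      have h6 := mul_le_mul_of_nonneg_right h5
        (show (0:ℝ) ≤ 2 * (n:ℝ) * R 0 / (((n:ℝ) + 1) * Jmax) from
          div_nonneg (mul_nonneg (by positivity) hR0.le) (by positivity))
      calc R 0 - R n
          = (1 / 2 * (((n:ℝ) + 1) / n) * (1 - R n / R 0) * Jmax) *
            (2 * (n:ℝ) * R 0 / (((n:ℝ) + 1) * Jmax)) := by field_simp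
        _ ≤ Jave * (2 * (n:ℝ) * R 0 / (((n:ℝ) + 1) * Jmax)) := h6
        _ = (n:ℝ) * R 0 * a := by rw [ha]; field_simp
    have hni : (0:ℝ) ≤ (n:ℝ) - (i:ℝ) := by linarith
    have hmul := mul_le_mul_of_nonneg_right haRa (mul_nonneg hni (hRpos i).le)
    have big : 0 ≤ (n:ℝ) * R 0 * (R n - R i * (1 - (n:ℝ) * a + (i:ℝ) * a)) := by
      linarith [h2, hmul]
    have hc : (0:ℝ) < (n:ℝ) * R 0 := mul_pos hn0 hR0
    have := (mul_nonneg_iff_of_pos_left hc).1 big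
    linarith
  -- the three conclusions
  have hJ0 : J 0 = 0 := by rw [hJ]; simp
  refine ⟨⟨?_, ?_⟩, ?_, ?_⟩
  · intro j hj
    have hjn : j ≤ n := by have := Finset.mem_range.1 hj; omega
    rcases Nat.eq_zero_or_pos j with h | h
    · rw [h, hy0]; linarith
    · rw [hyj j h hjn]; exact ha0
  · rw [Finset.sum_range_succ']
    have hc : ∀ j ∈ Finset.range n, ydot (j + 1) = a := by
      intro j hj
      exact hyj _ (by omega) (by have := Finset.mem_range.1 hj; omega)
    rw [Finset.sum_congr rfl hc, Finset.sum_const, Finset.card_range, nsmul_eq_mul, hy0]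
    ring
  · simp only [avgPow]
    rw [Finset.sum_range_succ']
    have hc : ∀ j ∈ Finset.range n, ydot (j + 1) * J (j + 1) = a * Jmax / n * ((j:ℝ) + 1) := by
      intro j hj
      rw [hyj _ (by omega) (by have := Finset.mem_range.1 hj; omega), hJ]
      push_cast
      ring
    rw [Finset.sum_congr rfl hc, ← Finset.mul_sum, gauss_sum n, hJ0, mul_zero, add_zero, ha]
    field_simp
  · intro x hx
    simp only [pay]
    have inner : ∀ i ∈ Finset.range (n + 1),
        (∑ j ∈ Finset.range (n + 1), x i * (if j ≤ i then R i else 0) * ydot j)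
        = x i * (R i * (1 - (n:ℝ) * a + (i:ℝ) * a)) := by
      intro i hi
      have hi' : i ≤ n := by have := Finset.mem_range.1 hi; omega
      have step1 : ∀ j, x i * (if j ≤ i then R i else 0) * ydot j
          = x i * (if j ≤ i then R i * ydot j else 0) := by
        intro j; by_cases h : j ≤ i <;> simp [h, mul_assoc]
      rw [Finset.sum_congr rfl (fun j _ => step1 j), ← Finset.mul_sum]
      congr 1
      have hsub : Finset.range (i + 1) ⊆ Finset.range (n + 1) :=
        Finset.range_subset_range.2 (by omega)
      have hvan : ∀ j ∈ Finset.range (n + 1), j ∉ Finset.range (i + 1) →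
          (if j ≤ i then R i * ydot j else 0) = 0 := by
        intro j _ hj
        rw [if_neg (by simp at hj; omega)]
      rw [← Finset.sum_subset hsub hvan,
        Finset.sum_congr rfl (fun j hj => if_pos (by have := Finset.mem_range.1 hj; omega)),
        ← Finset.mul_sum]
      congr 1
      rw [Finset.sum_range_succ']
      have hc : ∀ j ∈ Finset.range i, ydot (j + 1) = a := by
        intro j hj
        exact hyj _ (by omega) (by have := Finset.mem_range.1 hj; omega)
      rw [Finset.sum_congr rfl hc, Finset.sum_const, Finset.card_range, nsmul_eq_mul, hy0]
      ring
    rw [Finset.sum_congr rfl inner]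
    calc ∑ i ∈ Finset.range (n + 1), x i * (R i * (1 - (n:ℝ) * a + (i:ℝ) * a))
        ≤ ∑ i ∈ Finset.range (n + 1), x i * R n := by
          refine Finset.sum_le_sum fun i hi => ?_
          exact mul_le_mul_of_nonneg_left
            (perI i (by have := Finset.mem_range.1 hi; omega)) (hx.1 i hi)
      _ = R n := by rw [← Finset.sum_mul, hx.2, one_mul]
end

section
/- For every 0 ≤ i < n, the quantity U_i = (1 − R_n/R_i)·((n+1)/(2(n−i)))·J_max is maximized at i = 0; equivalently, for all 0 ≤ i < n, (1 − R_n/R_i)/(n − i) ≤ (1 − R_n/R_0)/n. -/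
open Real Set

private lemma log_lower {t : ℝ} (ht : 1 ≤ t) : 2 - 4 / (t + 1) ≤ Real.log t := by
  have hder : ∀ x : ℝ, 0 < x →
      HasDerivAt (fun x : ℝ => Real.log x - (2 - 4 / (x + 1)))
        (x⁻¹ - (0 - (0 * (x + 1) - 4 * 1) / (x + 1) ^ 2)) x := by
    intro x hx
    have h1 : HasDerivAt (fun x : ℝ => x + 1) 1 x := (hasDerivAt_id x).add_const 1
    have h2 : HasDerivAt (fun x : ℝ => 4 / (x + 1)) ((0 * (x + 1) - 4 * 1) / (x + 1) ^ 2) x :=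
      (hasDerivAt_const x 4).div h1 (by linarith)
    exact (Real.hasDerivAt_log hx.ne').sub ((hasDerivAt_const x 2).sub h2)
  have hmono : MonotoneOn (fun x : ℝ => Real.log x - (2 - 4 / (x + 1))) (Ici 1) := by
    apply monotoneOn_of_deriv_nonneg (convex_Ici 1)
    · intro x hx
      exact (hder x (lt_of_lt_of_le zero_lt_one hx)).continuousAt.continuousWithinAt
    · intro x hx
      rw [interior_Ici] at hx
      exact (hder x (lt_trans zero_lt_one hx)).differentiableAt.differentiableWithinAt
    · intro x hx
      rw [interior_Ici] at hx
      have hx0 : (0:ℝ) < x := lt_trans zero_lt_one hx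
      rw [(hder x hx0).deriv]
      have hx1 : (0:ℝ) < x + 1 := by linarith
      have key : x⁻¹ - (0 - (0 * (x + 1) - 4 * 1) / (x + 1) ^ 2)
          = (x - 1) ^ 2 / (x * (x + 1) ^ 2) := by
        field_simp
        ring
      rw [key]; positivity
  have h := hmono (self_mem_Ici) (show t ∈ Ici (1:ℝ) from ht) ht
  simp only [Real.log_one] at h
  norm_num at h
  linarith

private lemma phi_concave {P : ℝ} (hP : 0 < P) :
    ConcaveOn ℝ (Ioi (0:ℝ)) (fun u => 2 / (Real.log (u + P) - Real.log u)) := by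
  set L : ℝ → ℝ := fun u => Real.log (u + P) - Real.log u with hLdef
  have hLpos : ∀ u : ℝ, 0 < u → 0 < L u := by
    intro u hu
    have : Real.log u < Real.log (u + P) := Real.log_lt_log hu (by linarith)
    simp only [hLdef]; linarith
  have hLD : ∀ u : ℝ, 0 < u → HasDerivAt L (1 / (u + P) - 1 / u) u := by
    intro u hu
    have huP : (0:ℝ) < u + P := by linarith
    have h1 : HasDerivAt (fun u : ℝ => Real.log (u + P)) (1 / (u + P)) u :=
      HasDerivAt.log ((hasDerivAt_id u).add_const P) huP.ne'
    have h2 : HasDerivAt Real.log u⁻¹ u := Real.hasDerivAt_log hu.ne'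
    have := h1.fun_sub h2
    simpa [one_div] using this
  apply concaveOn_of_hasDerivWithinAt2_nonpos (convex_Ioi 0)
    (f' := fun u => (-2 * (1 / (u + P) - 1 / u)) / (L u) ^ 2)
    (f'' := fun u => (4 * (1 / (u + P) - 1 / u) ^ 2
        - 2 * (1 / u ^ 2 - 1 / (u + P) ^ 2) * L u) / (L u) ^ 3)
  · -- continuity
    intro u hu
    have hu' : (0:ℝ) < u := hu
    have hd : HasDerivAt (fun u => 2 / L u)
        ((0 * L u - 2 * (1 / (u + P) - 1 / u)) / (L u) ^ 2) u :=
      (hasDerivAt_const u 2).div (hLD u hu') (hLpos u hu').ne'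
    exact hd.continuousAt.continuousWithinAt
  · -- first derivative
    intro u hu
    rw [interior_Ioi] at hu
    have hu' : (0:ℝ) < u := hu
    have hd : HasDerivAt (fun u => 2 / L u)
        ((0 * L u - 2 * (1 / (u + P) - 1 / u)) / (L u) ^ 2) u :=
      (hasDerivAt_const u 2).div (hLD u hu') (hLpos u hu').ne'
    have he : (0 * L u - 2 * (1 / (u + P) - 1 / u)) / (L u) ^ 2
        = (-2 * (1 / (u + P) - 1 / u)) / (L u) ^ 2 := by ring
    rw [he] at hd
    exact hd.hasDerivWithinAt
  · -- second derivative
    intro u hu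
    rw [interior_Ioi] at hu
    have hu' : (0:ℝ) < u := hu
    have huP : (0:ℝ) < u + P := by linarith
    have hL : 0 < L u := hLpos u hu'
    have hnum : HasDerivAt (fun u : ℝ => -2 * (1 / (u + P) - 1 / u))
        (-2 * ((0 * (u + P) - 1 * 1) / (u + P) ^ 2 - (0 * u - 1 * 1) / u ^ 2)) u := by
      have h1 : HasDerivAt (fun u : ℝ => 1 / (u + P)) ((0 * (u + P) - 1 * 1) / (u + P) ^ 2) u :=
        (hasDerivAt_const u 1).div ((hasDerivAt_id u).add_const P) huP.ne'
      have h2 : HasDerivAt (fun u : ℝ => 1 / u) ((0 * u - 1 * 1) / u ^ 2) u :=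
        (hasDerivAt_const u 1).div (hasDerivAt_id u) hu'.ne'
      exact (h1.sub h2).const_mul (-2)
    have hden : HasDerivAt (fun u => (L u) ^ 2)
        (2 * (L u) ^ 1 * (1 / (u + P) - 1 / u)) u := by
      simpa using (hLD u hu').fun_pow 2
    have hd := hnum.div hden (by positivity : (L u) ^ 2 ≠ 0)
    have he : (-2 * ((0 * (u + P) - 1 * 1) / (u + P) ^ 2 - (0 * u - 1 * 1) / u ^ 2) * L u ^ 2
          - -2 * (1 / (u + P) - 1 / u) * (2 * L u ^ 1 * (1 / (u + P) - 1 / u))) / (L u ^ 2) ^ 2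
        = (4 * (1 / (u + P) - 1 / u) ^ 2
            - 2 * (1 / u ^ 2 - 1 / (u + P) ^ 2) * L u) / (L u) ^ 3 := by
      field_simp
      ring
    rw [he] at hd
    exact hd.hasDerivWithinAt
  · -- second derivative nonpositive
    intro u hu
    rw [interior_Ioi] at hu
    have hu' : (0:ℝ) < u := hu
    have huP : (0:ℝ) < u + P := by linarith
    have hL : 0 < L u := hLpos u hu'
    -- key inequality: L u ≥ 2P/(2u+P)
    have ht : (1:ℝ) ≤ (u + P) / u := by
      rw [le_div_iff₀ hu']; linarith
    have hlow := log_lower ht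
    have hLeq : L u = Real.log ((u + P) / u) := by
      simp only [hLdef]
      rw [Real.log_div huP.ne' hu'.ne']
    have he2 : 2 - 4 / ((u + P) / u + 1) = 2 * P / (2 * u + P) := by
      rw [div_add_one (by positivity : (u:ℝ) ≠ 0)]
      rw [div_div_eq_mul_div]
      field_simp
      ring
    have hkey : 2 * P / (2 * u + P) ≤ L u := by
      rw [hLeq]; rw [← he2]; exact hlow
    -- numerator ≤ 0
    have e1 : (1 / (u + P) - 1 / u) ^ 2 = P ^ 2 / (u * (u + P)) ^ 2 := by
      field_simp; ring
    have e2 : 1 / u ^ 2 - 1 / (u + P) ^ 2 = P * (2 * u + P) / (u ^ 2 * (u + P) ^ 2) := by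
      field_simp; ring
    have hnumle : 4 * (1 / (u + P) - 1 / u) ^ 2
        - 2 * (1 / u ^ 2 - 1 / (u + P) ^ 2) * L u ≤ 0 := by
      rw [e1, e2]
      have h3 : 2 * (P * (2 * u + P) / (u ^ 2 * (u + P) ^ 2)) * (2 * P / (2 * u + P))
          ≤ 2 * (P * (2 * u + P) / (u ^ 2 * (u + P) ^ 2)) * L u :=
        mul_le_mul_of_nonneg_left hkey (by positivity)
      have h4 : 2 * (P * (2 * u + P) / (u ^ 2 * (u + P) ^ 2)) * (2 * P / (2 * u + P))
          = 4 * (P ^ 2 / (u * (u + P)) ^ 2) := by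
        field_simp
        ring
      linarith
    exact div_nonpos_of_nonpos_of_nonneg hnumle (by positivity)

/-- the quantity `U_i = (1 - R_n/R_i)((n+1)/(2(n-i))) J_max` is maximized at
`i = 0`; equivalently `(1 - R_n/R_i)/(n - i) ≤ (1 - R_n/R_0)/n` for all `0 ≤ i < n`. -/
theorem stmt_15 (n : ℕ) (hn : 1 ≤ n) (P N Jmax : ℝ)
    (hP : 0 < P) (hN : 0 < N) (hJmax : 0 < Jmax)
    (R : ℕ → ℝ)
    (hR : ∀ i, R i = 1 / 2 * Real.log (1 + P / (N + (i : ℝ) / n * Jmax))) :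
    ∀ i < n,
      (1 - R n / R i) * (((n : ℝ) + 1) / (2 * ((n : ℝ) - (i : ℝ)))) * Jmax
        ≤ (1 - R n / R 0) * (((n : ℝ) + 1) / (2 * (n : ℝ))) * Jmax ∧
      (1 - R n / R i) / ((n : ℝ) - (i : ℝ)) ≤ (1 - R n / R 0) / (n : ℝ) := by
  intro i hi
  have hm : (0:ℝ) < (n:ℝ) := by exact_mod_cast Nat.pos_of_ne_zero (by omega)
  have hk : (0:ℝ) ≤ (i:ℝ) := Nat.cast_nonneg i
  have hkm : (i:ℝ) < (n:ℝ) := by exact_mod_cast hi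
  set m : ℝ := (n:ℝ)
  set k : ℝ := (i:ℝ)
  set L : ℝ → ℝ := fun u => Real.log (u + P) - Real.log u with hLdef
  have hlog : ∀ u : ℝ, 0 < u → Real.log (1 + P / u) = L u := by
    intro u hu
    have : (1:ℝ) + P / u = (u + P) / u := by field_simp
    rw [this, Real.log_div (by positivity) hu.ne']
  -- the three points
  have hu0 : (0:ℝ) < N := hN
  have hui : (0:ℝ) < N + k / m * Jmax := by positivity
  have hun : (0:ℝ) < N + Jmax := by linarith
  -- R values
  have hR0 : R 0 = L N / 2 := by
    rw [hR 0]
    simp only [Nat.cast_zero]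
    rw [zero_div, zero_mul, add_zero, hlog N hu0]
    ring
  have hRi : R i = L (N + k / m * Jmax) / 2 := by
    rw [hR i, hlog _ hui]; ring
  have hRn : R n = L (N + Jmax) / 2 := by
    rw [hR n]
    have : (n:ℝ) / (n:ℝ) = 1 := div_self hm.ne'
    rw [show ((n:ℝ) / n * Jmax) = Jmax by rw [this, one_mul]]
    rw [hlog _ hun]; ring
  have hLpos : ∀ u : ℝ, 0 < u → 0 < L u := by
    intro u hu
    have : Real.log u < Real.log (u + P) := Real.log_lt_log hu (by linarith)
    simp only [hLdef]; linarith
  have hA : 0 < L N := hLpos _ hu0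
  have hB : 0 < L (N + k / m * Jmax) := hLpos _ hui
  have hC : 0 < L (N + Jmax) := hLpos _ hun
  -- concavity
  have conc := phi_concave hP (P := P)
  have ha : (0:ℝ) ≤ (m - k) / m := div_nonneg (by linarith) hm.le
  have hb : (0:ℝ) ≤ k / m := by positivity
  have hab : (m - k) / m + k / m = 1 := by field_simp; ring
  have hcomb := conc.2 (show N ∈ Ioi (0:ℝ) from hu0)
    (show N + Jmax ∈ Ioi (0:ℝ) from hun) ha hb hab
  simp only [smul_eq_mul] at hcomb
  rw [show (m - k) / m * N + k / m * (N + Jmax) = N + k / m * Jmax by field_simp; ring] at hcomb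
  -- hcomb : (m-k)/m * (2 / L N) + k/m * (2 / L (N+Jmax)) ≤ 2 / L (N + k/m*Jmax)
  set A := L N
  set B := L (N + k / m * Jmax)
  set C := L (N + Jmax)
  have key : k * A * B + (m - k) * B * C ≤ m * A * C := by
    have h2 := mul_le_mul_of_nonneg_left hcomb
      (show (0:ℝ) ≤ m * A * B * C / 2 by positivity)
    have e1 : m * A * B * C / 2 * ((m - k) / m * (2 / A) + k / m * (2 / C))
        = (m - k) * B * C + k * A * B := by
      field_simp
    have e2 : m * A * B * C / 2 * (2 / B) = m * A * C := by
      field_simp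
    rw [e1, e2] at h2
    linarith
  -- final algebra
  have hRn' : R n = C / 2 := hRn
  have hRi' : R i = B / 2 := hRi
  have hR0' : R 0 = A / 2 := hR0
  have goal2 : (1 - R n / R i) / (m - k) ≤ (1 - R n / R 0) / m := by
    rw [hRn', hRi', hR0']
    have e3 : (1 - C / 2 / (B / 2)) / (m - k) = (B - C) / (B * (m - k)) := by
      field_simp
    have e4 : (1 - C / 2 / (A / 2)) / m = (A - C) / (A * m) := by
      field_simp
    rw [e3, e4, div_le_div_iff₀ (mul_pos hB (by linarith : (0:ℝ) < m - k)) (by positivity : 0 < A * m)]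
    nlinarith [key]
  refine ⟨?_, goal2⟩
  have h5 := mul_le_mul_of_nonneg_right goal2
    (show (0:ℝ) ≤ (m + 1) * Jmax / 2 by positivity)
  have hmk : m - k ≠ 0 := by linarith
  calc (1 - R n / R i) * ((m + 1) / (2 * (m - k))) * Jmax
      = (1 - R n / R i) / (m - k) * ((m + 1) * Jmax / 2) := by
        field_simp
    _ ≤ (1 - R n / R 0) / m * ((m + 1) * Jmax / 2) := h5
    _ = (1 - R n / R 0) * ((m + 1) / (2 * m)) * Jmax := by
        field_simp
end

section
/- For all real numbers a, b with 0 < b < a, the following inequality holds: a·(a − b)·ln(1 + b) > b·(1 + a)·ln(1 + a)·(ln(1 + a) − ln(1 + b)). -/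
open Real Set

/-- `(1-u) e^u < 1` for `u > 0`. -/
lemma aux_one_sub_mul_exp_lt {u : ℝ} (hu : 0 < u) : (1 - u) * Real.exp u < 1 := by
  have h := Real.add_one_lt_exp (x := -u) (by linarith)
  have he : (0:ℝ) < Real.exp u := Real.exp_pos u
  have : (1 - u) * Real.exp u < Real.exp (-u) * Real.exp u := by
    have h1 : 1 - u < Real.exp (-u) := by linarith
    exact mul_lt_mul_of_pos_right h1 he
  rwa [← Real.exp_add, neg_add_cancel, Real.exp_zero] at this

/-- `(2-u) e^u < 2+u` for `u > 0`. -/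
lemma aux_two_sub_mul_exp_lt {u : ℝ} (hu : 0 < u) : (2 - u) * Real.exp u < 2 + u := by
  set φ : ℝ → ℝ := fun u => 2 + u - (2 - u) * Real.exp u with hφ
  have hderiv : ∀ x : ℝ, HasDerivAt φ (1 - (1 - x) * Real.exp x) x := by
    intro x
    have h1 : HasDerivAt (fun u : ℝ => (2 - u) * Real.exp u)
        ((-1) * Real.exp x + (2 - x) * Real.exp x) x :=
      ((hasDerivAt_id x).const_sub 2).mul (Real.hasDerivAt_exp x)
    have h2 : HasDerivAt (fun u : ℝ => 2 + u) 1 x := (hasDerivAt_id x).const_add 2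
    have := h2.sub h1
    refine this.congr_deriv (Eq.symm ?_)
    ring
  have hmono : StrictMonoOn φ (Ici 0) := by
    apply strictMonoOn_of_deriv_pos (convex_Ici 0)
    · exact fun x _ => ((hderiv x).continuousAt).continuousWithinAt
    · intro x hx
      rw [interior_Ici] at hx
      rw [(hderiv x).deriv]
      have := aux_one_sub_mul_exp_lt hx
      linarith
  have h0 : φ 0 = 0 := by simp [hφ]
  have := hmono (self_mem_Ici) (le_of_lt hu) hu
  rw [h0] at this
  simp only [hφ] at this
  linarith

/-- `log (1+b) > 2b/(2+b)` for `b > 0`. -/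
lemma aux_log_gt {b : ℝ} (hb : 0 < b) : 2 * b / (2 + b) < Real.log (1 + b) := by
  set u := 2 * b / (2 + b) with hu
  have h2b : (0:ℝ) < 2 + b := by linarith
  have hupos : 0 < u := by positivity
  have key := aux_two_sub_mul_exp_lt hupos
  have h2u : 2 - u = 4 / (2 + b) := by rw [hu]; field_simp; ring
  have h2u' : 2 + u = (4 + 4 * b) / (2 + b) := by rw [hu]; field_simp; ring
  have hexp : Real.exp u < 1 + b := by
    rw [h2u, h2u'] at key
    have h4 : (0:ℝ) < 4 / (2 + b) := by positivity
    rw [div_mul_eq_mul_div, div_lt_div_iff₀ h2b h2b] at key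
    have := (mul_lt_mul_iff_left₀ (by positivity : (0:ℝ) < 2 + b)).mp key
    nlinarith [Real.exp_pos u]
  rw [hu] at hexp ⊢
  exact (Real.lt_log_iff_exp_lt (by linarith)).mpr hexp

/-- for all `0 < b < a`,
`a (a - b) ln(1 + b) > b (1 + a) ln(1 + a) (ln(1 + a) - ln(1 + b))`. -/
theorem stmt_16 (a b : ℝ) (hb : 0 < b) (hba : b < a) :
    b * (1 + a) * Real.log (1 + a) * (Real.log (1 + a) - Real.log (1 + b))
      < a * (a - b) * Real.log (1 + b) := by
  set s := Real.log (1 + b) with hs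
  have hs0 : 0 < s := Real.log_pos (by linarith)
  set L : ℝ → ℝ := fun x => Real.log (1 + x) with hL
  -- the three functions
  set F : ℝ → ℝ := fun x => x * (x - b) * s - b * (1 + x) * L x * (L x - s) with hF
  set G : ℝ → ℝ := fun x => (2 * x - b) * s - b * ((L x + 1) * (L x - s) + L x) with hG
  set H : ℝ → ℝ := fun x => 2 * s - b / (1 + x) * (2 * L x - s + 2) with hH
  have hLpos : ∀ x, b ≤ x → 0 < 1 + x := fun x hx => by linarith
  have hLd : ∀ x, b ≤ x → HasDerivAt L (1 / (1 + x)) x := by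
    intro x hx
    have h1 : HasDerivAt (fun y : ℝ => 1 + y) 1 x := (hasDerivAt_id x).const_add 1
    have := (Real.hasDerivAt_log (ne_of_gt (hLpos x hx))).comp x h1
    exact this.congr_deriv (by simp)
  have hLs : ∀ x, b ≤ x → s ≤ L x := by
    intro x hx
    exact Real.log_le_log (by linarith) (by linarith)
  -- derivatives
  have hFd : ∀ x, b ≤ x → HasDerivAt F (G x) x := by
    intro x hx
    have h1 : HasDerivAt (fun y : ℝ => y * (y - b) * s) ((x - b) * s + x * s) x := by
      have := ((hasDerivAt_id x).mul ((hasDerivAt_id x).sub_const b)).mul_const s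
      refine this.congr_deriv (Eq.symm ?_); simp only [id_eq]; ring
    have h2 : HasDerivAt (fun y : ℝ => b * ((1 + y) * L y * (L y - s)))
        (b * ((1 * L x + (1 + x) * (1 / (1 + x))) * (L x - s)
          + (1 + x) * L x * (1 / (1 + x)))) x := by
      have hl := hLd x hx
      have ha : HasDerivAt (fun y : ℝ => (1 + y) * L y)
          (1 * L x + (1 + x) * (1 / (1 + x))) x :=
        ((hasDerivAt_id x).const_add 1).mul hl
      have hb2 : HasDerivAt (fun y : ℝ => (1 + y) * L y * (L y - s))
          ((1 * L x + (1 + x) * (1 / (1 + x))) * (L x - s) + (1 + x) * L x * (1 / (1 + x))) x :=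
        ha.mul (hl.sub_const s)
      exact hb2.const_mul b
    have heq : F = (fun y : ℝ => y * (y - b) * s - b * ((1 + y) * L y * (L y - s))) := by
      funext y; simp only [hF]; ring
    rw [heq]
    have := h1.sub h2
    refine this.congr_deriv (Eq.symm ?_)
    have hne : (1 + x) ≠ 0 := ne_of_gt (hLpos x hx)
    field_simp [hG]
    ring
  have hGd : ∀ x, b ≤ x → HasDerivAt G (H x) x := by
    intro x hx
    have hl := hLd x hx
    have h1 : HasDerivAt (fun y : ℝ => (2 * y - b) * s) (2 * s) x := by
      have := (((hasDerivAt_id x).const_mul 2).sub_const b).mul_const s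
      refine this.congr_deriv (Eq.symm ?_); ring
    have h2 : HasDerivAt (fun y : ℝ => b * ((L y + 1) * (L y - s) + L y))
        (b * ((1 / (1 + x)) * (L x - s) + (L x + 1) * (1 / (1 + x)) + 1 / (1 + x))) x := by
      have := (((hl.add_const 1).mul (hl.sub_const s)).add hl).const_mul b
      exact this
    have := h1.sub h2
    refine this.congr_deriv (Eq.symm ?_)
    have hne : (1 + x) ≠ 0 := ne_of_gt (hLpos x hx)
    simp only [hH]
    field_simp
    ring_nf
  have hHd : ∀ x, b ≤ x → HasDerivAt H (b / (1 + x) ^ 2 * (2 * L x - s)) x := by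
    intro x hx
    have hl := hLd x hx
    have hne : (1 + x) ≠ 0 := ne_of_gt (hLpos x hx)
    have hq : HasDerivAt (fun y : ℝ => b / (1 + y)) (-(b * 1) / (1 + x) ^ 2) x := by
      have h1 : HasDerivAt (fun y : ℝ => 1 + y) 1 x := (hasDerivAt_id x).const_add 1
      exact (hasDerivAt_const x b).div h1 hne |>.congr_deriv (by
        field_simp; ring)
    have hm : HasDerivAt (fun y : ℝ => 2 * L y - s + 2) (2 * (1 / (1 + x))) x := by
      have := ((hl.const_mul 2).sub_const s).add_const 2
      exact this
    have h2 : HasDerivAt (fun y : ℝ => b / (1 + y) * (2 * L y - s + 2))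
        ((-(b * 1) / (1 + x) ^ 2) * (2 * L x - s + 2) + (b / (1 + x)) * (2 * (1 / (1 + x)))) x :=
      hq.mul hm
    have h1 : HasDerivAt (fun _ : ℝ => 2 * s) 0 x := hasDerivAt_const x (2 * s)
    have := h1.sub h2
    refine this.congr_deriv (Eq.symm ?_)
    field_simp
    ring
  -- H is positive on Ici b
  have hHb : 0 < H b := by
    have h1 : 2 * b / (2 + b) < s := aux_log_gt hb
    have hne : (0:ℝ) < 1 + b := by linarith
    have : L b = s := rfl
    simp only [hH, this]
    have h1' : 2 * b < s * (2 + b) := by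
      rw [div_lt_iff₀ (by linarith : (0:ℝ) < 2 + b)] at h1; linarith
    rw [sub_pos, div_mul_eq_mul_div, div_lt_iff₀ hne]
    nlinarith
  have hHmono : StrictMonoOn H (Ici b) := by
    apply strictMonoOn_of_deriv_pos (convex_Ici b)
    · exact fun x hx => ((hHd x hx).continuousAt).continuousWithinAt
    · intro x hx
      rw [interior_Ici] at hx
      rw [(hHd x (le_of_lt hx)).deriv]
      have h1 := hLs x (le_of_lt hx)
      have h2 := hLpos x (le_of_lt hx)
      have : 0 < 2 * L x - s := by linarith
      positivity
  have hHpos : ∀ x, b ≤ x → 0 < H x := by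
    intro x hx
    rcases eq_or_lt_of_le hx with h | h
    · rwa [← h]
    · have := hHmono self_mem_Ici hx h
      linarith
  -- G is positive on Ioi b
  have hGb : G b = 0 := by simp only [hG]; ring
  have hGmono : StrictMonoOn G (Ici b) := by
    apply strictMonoOn_of_deriv_pos (convex_Ici b)
    · exact fun x hx => ((hGd x hx).continuousAt).continuousWithinAt
    · intro x hx
      rw [interior_Ici] at hx
      rw [(hGd x (le_of_lt hx)).deriv]
      exact hHpos x (le_of_lt hx)
  have hGpos : ∀ x, b < x → 0 < G x := by
    intro x hx
    have := hGmono self_mem_Ici (le_of_lt hx) hx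
    rwa [hGb] at this
  -- F is positive at a
  have hFb : F b = 0 := by simp only [hF]; ring
  have hFmono : StrictMonoOn F (Ici b) := by
    apply strictMonoOn_of_deriv_pos (convex_Ici b)
    · exact fun x hx => ((hFd x hx).continuousAt).continuousWithinAt
    · intro x hx
      rw [interior_Ici] at hx
      rw [(hFd x (le_of_lt hx)).deriv]
      exact hGpos x hx
  have hFa : 0 < F a := by
    have := hFmono self_mem_Ici (le_of_lt hba) hba
    rwa [hFb] at this
  simp only [hF, hL] at hFa
  linarith
end

section
/- Let P > 0, N > 0, J_max > 0 be real numbers, and define R(J) = (1/2)·ln(1 + P/(N + J)) and F(J) = (J_max/(J_max − J))·(1 − R(J_max)/R(J)) for J ∈ [0, J_max). Then F is strictly decreasing on [0, J_max): for all 0 ≤ J' < J'' < J_max, F(J'') < F(J'). -/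
lemma aux_log (t : ℝ) (ht : 1 < t) : 2 * (t - 1) / (t + 1) < Real.log t := by
  have key : StrictMonoOn (fun x : ℝ => Real.log x - 2 * (x - 1) / (x + 1)) (Set.Ici 1) := by
    apply strictMonoOn_of_deriv_pos (convex_Ici 1)
    · apply ContinuousOn.sub
      · exact Real.continuousOn_log.mono (by intro x hx; simp at hx ⊢; linarith)
      · exact ContinuousOn.div (by fun_prop) (by fun_prop)
          (fun x hx => by simp at hx; positivity)
    · intro x hx
      rw [interior_Ici] at hx
      have hx1 : (1:ℝ) < x := hx
      have h0 : (0:ℝ) < x := by linarith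
      have hd : HasDerivAt (fun x : ℝ => Real.log x - 2 * (x - 1) / (x + 1))
          (x⁻¹ - (2 * 1 * (x + 1) - 2 * (x - 1) * 1) / (x + 1) ^ 2) x := by
        exact (Real.hasDerivAt_log h0.ne').sub
          ((((hasDerivAt_id x).sub_const 1).const_mul 2).div
            ((hasDerivAt_id x).add_const 1) (by linarith))
      rw [hd.deriv]
      have he : x⁻¹ - (2 * 1 * (x + 1) - 2 * (x - 1) * 1) / (x + 1) ^ 2
          = (x - 1) ^ 2 / (x * (x + 1) ^ 2) := by
        field_simp
        ring
      rw [he]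
      exact div_pos (pow_pos (by linarith) 2) (by positivity)
  have h := key (Set.self_mem_Ici) (Set.mem_Ici.mpr ht.le) ht
  simp [Real.log_one] at h
  linarith

lemma aux_log2 (a b : ℝ) (ha : 0 < a) (hab : a < b) :
    2 * (b - a) / (a + b) < Real.log b - Real.log a := by
  have hb : 0 < b := ha.trans hab
  have ht : 1 < b / a := (one_lt_div ha).mpr hab
  have h := aux_log (b / a) ht
  rw [Real.log_div hb.ne' ha.ne'] at h
  rw [div_lt_iff₀ (by positivity : (0:ℝ) < a + b)]
  have h' := (div_lt_iff₀ (by positivity : (0:ℝ) < b / a + 1)).mp h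
  nlinarith [mul_lt_mul_of_pos_right h' ha, div_mul_cancel₀ b ha.ne']

/-- with `R(J) = (1/2) ln(1 + P/(N + J))` and
`F(J) = (J_max/(J_max - J))(1 - R(J_max)/R(J))`, the function `F` is strictly decreasing
on `[0, J_max)`. -/
theorem stmt_17 (P N Jmax : ℝ) (hP : 0 < P) (hN : 0 < N) (hJmax : 0 < Jmax)
    (R F : ℝ → ℝ)
    (hR : ∀ Jv : ℝ, R Jv = 1 / 2 * Real.log (1 + P / (N + Jv)))
    (hF : ∀ Jv : ℝ, F Jv = Jmax / (Jmax - Jv) * (1 - R Jmax / R Jv)) :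
    ∀ J' J'' : ℝ, 0 ≤ J' → J' < J'' → J'' < Jmax → F J'' < F J' := by
  intro J' J'' h0 h12 h2max
  set L : ℝ → ℝ := fun x => Real.log (N + P + x) - Real.log (N + x) with hLdef
  set c : ℝ := L Jmax with hcdef
  set h : ℝ → ℝ := fun x => 1 - c / L x with hhdef
  set u : ℝ → ℝ := fun x => (N + P + x)⁻¹ - (N + x)⁻¹ with hudef
  -- positivity of L
  have hLpos : ∀ x : ℝ, 0 < N + x → 0 < L x := by
    intro x hx
    have : Real.log (N + x) < Real.log (N + P + x) := Real.log_lt_log hx (by linarith)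
    simp only [hLdef]
    linarith
  have hcpos : 0 < c := hLpos Jmax (by linarith)
  -- derivative of L
  have hLd : ∀ x : ℝ, 0 < N + x → HasDerivAt L (u x) x := by
    intro x hx
    have d1 : HasDerivAt (fun y : ℝ => Real.log (N + P + y)) (1 / (N + P + x)) x :=
      ((hasDerivAt_id x).const_add (N + P)).log (by intro hc; simp only [id_eq] at hc; linarith)
    have d2 : HasDerivAt (fun y : ℝ => Real.log (N + y)) (1 / (N + x)) x :=
      ((hasDerivAt_id x).const_add N).log hx.ne'
    exact (d1.sub d2).congr_deriv (by simp [hudef, one_div])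
  -- derivative of u
  have hud : ∀ x : ℝ, 0 < N + x →
      HasDerivAt u (-1 / (N + P + x) ^ 2 - -1 / (N + x) ^ 2) x := by
    intro x hx
    have d1 : HasDerivAt (fun y : ℝ => (N + P + y)⁻¹) (-1 / (N + P + x) ^ 2) x :=
      ((hasDerivAt_id x).const_add (N + P)).inv (by intro hc; simp only [id_eq] at hc; linarith)
    have d2 : HasDerivAt (fun y : ℝ => (N + y)⁻¹) (-1 / (N + x) ^ 2) x :=
      ((hasDerivAt_id x).const_add N).inv hx.ne'
    exact d1.sub d2
  -- derivative of h
  have hhd : ∀ x : ℝ, 0 < N + x → HasDerivAt h (c * u x / (L x) ^ 2) x := by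
    intro x hx
    have hL0 := (hLpos x hx).ne'
    have d1 : HasDerivAt (fun y : ℝ => c / L y)
        ((0 * L x - c * u x) / (L x) ^ 2) x :=
      (hasDerivAt_const x c).div (hLd x hx) hL0
    have d2 := (hasDerivAt_const x (1:ℝ)).sub d1
    exact d2.congr_deriv (by ring)
  -- strict convexity of h on [0, ∞)
  have hconv : StrictConvexOn ℝ (Set.Ici (0:ℝ)) h := by
    apply strictConvexOn_of_deriv2_pos (convex_Ici 0)
    · intro x hx
      have hx' : 0 < N + x := by have := Set.mem_Ici.mp hx; linarith
      exact (hhd x hx').continuousAt.continuousWithinAt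
    · intro x hx
      rw [interior_Ici] at hx
      have hx0 : (0:ℝ) < x := hx
      have hx' : 0 < N + x := by linarith
      have hb : 0 < N + P + x := by linarith
      have hL0 := hLpos x hx'
      -- derivative of h1 := fun y => c * u y / (L y)^2
      have hh1d : HasDerivAt (fun y : ℝ => c * u y / (L y) ^ 2)
          ((c * (-1 / (N + P + x) ^ 2 - -1 / (N + x) ^ 2) * (L x) ^ 2
            - c * u x * (2 * L x ^ 1 * u x)) / ((L x) ^ 2) ^ 2) x := by
        exact ((hud x hx').const_mul c).div ((hLd x hx').pow 2)
          (by positivity)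
      have hev : ∀ᶠ y in nhds x, 0 < N + y := by
        filter_upwards [eventually_gt_nhds (show -N < x by linarith)] with y hy
        linarith
      have hdh : deriv h =ᶠ[nhds x] fun y => c * u y / (L y) ^ 2 := by
        filter_upwards [hev] with y hy using (hhd y hy).deriv
      have e2 : deriv^[2] h x = deriv (deriv h) x := rfl
      rw [e2, hdh.deriv_eq, hh1d.deriv]
      -- positivity of the second derivative
      set a := N + x with hadef
      set b := N + P + x with hbdef
      have hlog := aux_log2 a b hx' (by simp [hadef, hbdef]; linarith)
      have hkey : 2 * (b - a) < (a + b) * L x := by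
        have hab : (0:ℝ) < a + b := by positivity
        rw [div_lt_iff₀ hab] at hlog
        have : L x = Real.log b - Real.log a := rfl
        nlinarith [hlog]
      have hnum : c * (-1 / b ^ 2 - -1 / a ^ 2) * (L x) ^ 2
            - c * u x * (2 * L x ^ 1 * u x)
          = c * L x * ((b - a) * ((a + b) * L x - 2 * (b - a))) / (a ^ 2 * b ^ 2) := by
        have hux : u x = (a - b) / (a * b) := by
          rw [hadef, hbdef]
          simp only [hudef]
          rw [inv_sub_inv (show N + P + x ≠ 0 by intro hc; linarith)
            (show N + x ≠ 0 by intro hc; linarith), mul_comm]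
        rw [hux]
        field_simp
        ring
      rw [hnum]
      have hba : 0 < b - a := by simp [hadef, hbdef]; linarith
      have hfac : 0 < (a + b) * L x - 2 * (b - a) := by linarith
      positivity
  -- evaluate R and h
  have hRL : ∀ J : ℝ, 0 < N + J → R J = 1 / 2 * L J := by
    intro J hJ
    rw [hR]
    congr 1
    have e : 1 + P / (N + J) = (N + P + J) / (N + J) := by field_simp; ring
    rw [e, Real.log_div (by linarith) hJ.ne']
  have hhmax : h Jmax = 0 := by
    simp only [hhdef, ← hcdef]
    rw [div_self hcpos.ne']
    ring
  have hFh : ∀ J : ℝ, 0 < N + J → J < Jmax → F J = -(Jmax * (h J / (J - Jmax))) := by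
    intro J hJ hJm
    have hLJ := (hLpos J hJ).ne'
    rw [hF, hRL Jmax (by linarith), hRL J hJ]
    have e1 : 1 - 1 / 2 * L Jmax / (1 / 2 * L J) = h J := by
      simp only [hhdef, ← hcdef]
      congr 1
      rw [mul_div_mul_left _ _ (by norm_num : (1:ℝ)/2 ≠ 0)]
    rw [e1]
    rw [show J - Jmax = -(Jmax - J) by ring, div_neg, mul_neg, neg_neg,
      div_mul_eq_mul_div, mul_div_assoc]
  -- apply the secant monotonicity
  have hs := hconv.secant_strict_mono (a := Jmax)
    (Set.mem_Ici.mpr hJmax.le) (Set.mem_Ici.mpr h0)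
    (Set.mem_Ici.mpr (h0.trans h12.le))
    (ne_of_lt (h12.trans h2max)) (ne_of_lt h2max) h12
  rw [hhmax, sub_zero, sub_zero] at hs
  rw [hFh J' (by linarith) (h12.trans h2max), hFh J'' (by linarith) h2max]
  have := mul_lt_mul_of_pos_left hs hJmax
  linarith
end
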